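/- arXiv:1811.04399 — 5 statements merged into one kernel-verified Lean document; each statement's English description precedes it below -/
import Mathlib

section
/- For coprime positive integers r, b with b ≥ 2, one has c₀(r/b) = (1/r)·c₀(1/b) - (1/r)·Q(r/b), where Q(r/b) = ∑_{m=1}^{b-1} cot(πmr/b)·⌊rm/b⌋. -/
open Real Finset

/-- The cotangent sum `c₀(r/b) = -∑_{m=1}^{b-1} (m/b) cot(π m r / b)`. -/
noncomputable def c0 (r b : ℕ) : ℝ :=
  -∑ m ∈ Finset.Ico 1 b, (m / b : ℝ) * Real.cot (π * m * r / b)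

/-- `Q(r/b) = ∑_{m=1}^{b-1} cot(π m r / b) ⌊r m / b⌋`. -/
noncomputable def Qsum (r b : ℕ) : ℝ :=
  ∑ m ∈ Finset.Ico 1 b, Real.cot (π * m * r / b) * ⌊(r * m : ℝ) / b⌋

lemma cot_add_int_mul_pi (x : ℝ) (n : ℤ) : Real.cot (x + n * π) = Real.cot x := by
  rw [Real.cot_eq_cos_div_sin, Real.cot_eq_cos_div_sin, Real.sin_add_int_mul_pi,
    Real.cos_add_int_mul_pi, mul_div_mul_left]
  positivity

/-- For coprime positive integers `r, b` with `b ≥ 2`,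
`c₀(r/b) = (1/r) c₀(1/b) - (1/r) Q(r/b)`. -/
theorem c0_eq_c0_one_sub_Q (r b : ℕ) (hr : 0 < r) (hb : 2 ≤ b)
    (hrb : Nat.Coprime r b) :
    c0 r b = (1 / r : ℝ) * c0 1 b - (1 / r : ℝ) * Qsum r b := by
  haveI : NeZero b := ⟨by omega⟩
  have hb0 : 0 < b := by omega
  have hbR : (b : ℝ) ≠ 0 := by positivity
  set s := ((r : ZMod b)⁻¹).val with hs_def
  -- r * s ≡ 1 [MOD b]
  have hrs : r * s ≡ 1 [MOD b] := by
    have h1 : ((r * s : ℕ) : ZMod b) = ((1 : ℕ) : ZMod b) := by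
      push_cast
      rw [ZMod.natCast_zmod_val]
      rw [ZMod.coe_mul_inv_eq_one r hrb]
    exact (ZMod.natCast_eq_natCast_iff _ _ _).mp h1
  -- helper: a * c ≡ 1 [MOD b] → a * (c * m % b) % b = m % b
  have hcancel : ∀ a c m : ℕ, a * c ≡ 1 [MOD b] → a * (c * m % b) % b = m % b := by
    intro a c m hac
    have h1 : a * (c * m % b) ≡ a * (c * m) [MOD b] := (Nat.mod_modEq _ _).mul_left a
    have h2 : a * (c * m) ≡ 1 * m [MOD b] := by
      rw [← mul_assoc]
      exact hac.mul_right m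
    have h3 := h1.trans h2
    simp only [one_mul] at h3
    exact h3
  have hsr : s * r ≡ 1 [MOD b] := by rwa [mul_comm] at hrs
  -- membership: if m ∈ Ico 1 b and a coprime considerations
  have hmem : ∀ a m : ℕ, (∃ c, c * a ≡ 1 [MOD b]) → m ∈ Finset.Ico 1 b →
      a * m % b ∈ Finset.Ico 1 b := by
    rintro a m ⟨c, hc⟩ hm
    rw [Finset.mem_Ico] at hm ⊢
    refine ⟨?_, Nat.mod_lt _ hb0⟩
    rcases Nat.eq_zero_or_pos (a * m % b) with h0 | h1
    · exfalso
      have : c * (a * m % b) % b = m % b := hcancel c a m hc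
      rw [h0, Nat.mul_zero, Nat.zero_mod] at this
      rw [Nat.mod_eq_of_lt hm.2] at this
      omega
    · exact h1
  -- key reindexing identity
  have key : ∑ m ∈ Finset.Ico 1 b, ((m : ℝ) / b) * Real.cot (π * m * 1 / b)
      = ∑ m ∈ Finset.Ico 1 b,
          ((r : ℝ) * ((m : ℝ) / b) * Real.cot (π * m * r / b)
            - Real.cot (π * m * r / b) * ⌊(r * m : ℝ) / b⌋) := by
    rw [eq_comm]
    refine Finset.sum_nbij' (fun m => r * m % b) (fun k => s * k % b)
      (fun m hm => hmem r m ⟨s, hsr⟩ hm)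
      (fun k hk => hmem s k ⟨r, hrs⟩ hk)
      (fun m hm => ?_) (fun k hk => ?_) (fun m hm => ?_)
    · rw [Finset.mem_Ico] at hm
      show s * (r * m % b) % b = m
      rw [hcancel s r m hsr, Nat.mod_eq_of_lt hm.2]
    · rw [Finset.mem_Ico] at hk
      show r * (s * k % b) % b = k
      rw [hcancel r s k hrs, Nat.mod_eq_of_lt hk.2]
    · -- term equality
      set q : ℕ := r * m / b with hq
      set k : ℕ := r * m % b with hk
      have hdm : b * q + k = r * m := Nat.div_add_mod (r * m) b
      have hkb : k < b := Nat.mod_lt _ hb0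
      have hkR : (k : ℝ) = r * m - b * q := by
        have : ((b * q + k : ℕ) : ℝ) = ((r * m : ℕ) : ℝ) := by rw [hdm]
        push_cast at this
        linarith
      have hkbR : (k : ℝ) < b := by exact_mod_cast hkb
      have hk0R : (0 : ℝ) ≤ k := by positivity
      have hfloor : ⌊(r * m : ℝ) / b⌋ = (q : ℤ) := by
        rw [Int.floor_eq_iff]
        constructor
        · rw [le_div_iff₀ (by positivity)]
          push_cast
          linarith
        · rw [div_lt_iff₀ (by positivity)]
          push_cast
          linarith
      have hcot : Real.cot (π * k * 1 / b) = Real.cot (π * m * r / b) := by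
        have h := cot_add_int_mul_pi (π * m * r / b) (-(q : ℤ))
        rw [← h]
        congr 1
        push_cast
        rw [hkR]
        field_simp
        ring
      rw [hcot, hfloor]
      have hk_div : (k : ℝ) / b = (r : ℝ) * (m / b) - q := by
        rw [hkR]
        field_simp
      rw [hk_div]
      push_cast
      ring
  -- conclude
  have hrR : (r : ℝ) ≠ 0 := by positivity
  have key2 : c0 1 b = (r : ℝ) * c0 r b + Qsum r b := by
    unfold c0 Qsum
    push_cast at key ⊢
    rw [key, Finset.sum_sub_distrib,
      show (∑ x ∈ Finset.Ico 1 b, (r : ℝ) * ((x : ℝ) / b) * Real.cot (π * x * r / b))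
          = (r : ℝ) * ∑ x ∈ Finset.Ico 1 b, ((x : ℝ) / b) * Real.cot (π * x * r / b) by
        rw [Finset.mul_sum]
        exact Finset.sum_congr rfl fun x _ => by ring]
    ring
  rw [key2]
  field_simp
  ring
end

section
/- The Dedekind sum reciprocity formula: for coprime positive integers r, b, s(r/b) + s(b/r) = -1/4 + (1/12)(r/b + b/r + 1/(rb)). -/
open Finset
open scoped Classical

/-- The sawtooth function `((x))`. -/
noncomputable def sawtooth (x : ℝ) : ℝ :=
  if _ : ∃ n : ℤ, x = n then 0 else Int.fract x - 1 / 2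

/-- The Dedekind sum `s(r/b) = ∑_{μ=1}^{b} ((rμ/b)) ((μ/b))`. -/
noncomputable def dedekindSum (r b : ℕ) : ℝ :=
  ∑ μ ∈ Finset.Icc 1 b, sawtooth ((r * μ : ℝ) / b) * sawtooth ((μ : ℝ) / b)

namespace DedekindAux


def Tz (k : ℕ) : ℤ := ∑ μ ∈ Finset.Icc 1 (k-1), (μ : ℤ)
def Sz (k : ℕ) : ℤ := ∑ μ ∈ Finset.Icc 1 (k-1), (μ : ℤ)^2
def Fz (h k : ℕ) : ℤ := ∑ μ ∈ Finset.Icc 1 (k-1), (μ : ℤ) * ((h*μ/k : ℕ) : ℤ)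
def Pz (h k : ℕ) : ℤ := ∑ μ ∈ Finset.Icc 1 (k-1), ((h*μ/k : ℕ) : ℤ)
def Qz (h k : ℕ) : ℤ := ∑ μ ∈ Finset.Icc 1 (k-1), ((h*μ/k : ℕ) : ℤ)^2
def Dz (h k : ℕ) : ℤ := ∑ μ ∈ Finset.Icc 1 (k-1),
  (2*(h:ℤ)*(μ:ℤ) - 2*(k:ℤ)*((h*μ/k : ℕ) : ℤ) - (k:ℤ)) * (2*(μ:ℤ) - (k:ℤ))

lemma gauss1 (n : ℕ) : 2 * ∑ μ ∈ Finset.Icc 1 n, (μ:ℤ) = n*(n+1) := by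
  induction n with
  | zero => simp
  | succ m ih =>
    rw [Finset.sum_Icc_succ_top (by omega), mul_add, ih]
    push_cast; ring

lemma gauss2 (n : ℕ) : 6 * ∑ μ ∈ Finset.Icc 1 n, (μ:ℤ)^2 = n*(n+1)*(2*n+1) := by
  induction n with
  | zero => simp
  | succ m ih =>
    rw [Finset.sum_Icc_succ_top (by omega), mul_add, ih]
    push_cast; ring

lemma gaussOdd (n : ℕ) : ∑ μ ∈ Finset.Icc 1 n, (2*(μ:ℤ)-1) = (n:ℤ)^2 := by
  induction n with
  | zero => simp
  | succ m ih =>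
    rw [Finset.sum_Icc_succ_top (by omega), ih]
    push_cast; ring

lemma lT (k : ℕ) (hk : 0 < k) : 2 * Tz k = (k:ℤ) * ((k:ℤ) - 1) := by
  unfold Tz
  rw [gauss1]
  have : ((k-1 : ℕ) : ℤ) = (k:ℤ) - 1 := by
    rw [Nat.cast_sub hk]; norm_num
  rw [this]; ring

lemma lS (k : ℕ) (hk : 0 < k) : 6 * Sz k = ((k:ℤ)-1)*(k:ℤ)*(2*(k:ℤ)-1) := by
  unfold Sz
  rw [gauss2]
  have : ((k-1 : ℕ) : ℤ) = (k:ℤ) - 1 := by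
    rw [Nat.cast_sub hk]; norm_num
  rw [this]; ring

lemma notdvd (h k μ : ℕ) (cop : Nat.Coprime h k) (h1 : 1 ≤ μ) (h2 : μ ≤ k-1) :
    ¬ (k ∣ h*μ) := by
  intro hd
  have hdμ : k ∣ μ := (Nat.Coprime.dvd_of_dvd_mul_left cop.symm) hd
  have := Nat.le_of_dvd (by omega) hdμ
  omega


lemma divPair (h k μ : ℕ) (hh : 0 < h) (hk : 0 < k) (cop : Nat.Coprime h k)
    (h1 : 1 ≤ μ) (h2 : μ ≤ k - 1) :
    ((h*μ/k : ℕ) : ℤ) + ((h*(k-μ)/k : ℕ) : ℤ) = (h:ℤ) - 1 := by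
  set a := h*μ with ha'
  set b := h*(k-μ) with hb'
  have hab : a + b = h * k := by
    rw [ha', hb', ← Nat.mul_add]
    congr 1
    omega
  have hda : ¬ (k ∣ a) := notdvd h k μ cop h1 h2
  have hma : a % k ≠ 0 := fun hz => hda (Nat.dvd_of_mod_eq_zero hz)
  have hma' : a % k < k := Nat.mod_lt _ hk
  have hmb' : b % k < k := Nat.mod_lt _ hk
  have hsum : a % k + b % k = k := by
    have hmod : (a % k + b % k) % k = 0 := by
      rw [← Nat.add_mod, hab, Nat.mul_mod_left]
    have hd : k ∣ a % k + b % k := Nat.dvd_of_mod_eq_zero hmod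
    have hle : k ≤ a % k + b % k := Nat.le_of_dvd (by omega) hd
    have hd2 : k ∣ a % k + b % k - k := Nat.dvd_sub hd dvd_rfl
    have hlt2 : a % k + b % k - k < k := by omega
    have := Nat.eq_zero_of_dvd_of_lt hd2 hlt2
    omega
  have hk0 : (k:ℤ) ≠ 0 := by exact_mod_cast hk.ne'
  apply mul_right_cancel₀ hk0
  have hA : (a:ℤ) = (k:ℤ) * ((a/k : ℕ):ℤ) + ((a%k : ℕ):ℤ) := by exact_mod_cast (Nat.div_add_mod a k).symm
  have hB : (b:ℤ) = (k:ℤ) * ((b/k : ℕ):ℤ) + ((b%k : ℕ):ℤ) := by exact_mod_cast (Nat.div_add_mod b k).symm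
  have habZ : (a:ℤ) + (b:ℤ) = (h:ℤ) * (k:ℤ) := by exact_mod_cast hab
  have hsumZ : ((a%k : ℕ):ℤ) + ((b%k : ℕ):ℤ) = (k:ℤ) := by exact_mod_cast hsum
  linear_combination -hA - hB + habZ - hsumZ


lemma lP (h k : ℕ) (hh : 0 < h) (hk : 0 < k) (cop : Nat.Coprime h k) :
    2 * Pz h k = ((h:ℤ)-1) * ((k:ℤ)-1) := by
  have refl : Pz h k = ∑ μ ∈ Finset.Icc 1 (k-1), ((h*(k-μ)/k : ℕ) : ℤ) := by
    unfold Pz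
    apply Finset.sum_nbij' (i := fun μ => k - μ) (j := fun μ => k - μ)
    · intro a ha; simp only [mem_Icc] at *; omega
    · intro a ha; simp only [mem_Icc] at *; omega
    · intro a ha; simp only [mem_Icc] at ha; omega
    · intro a ha; simp only [mem_Icc] at ha; omega
    · intro a ha; simp only [mem_Icc] at ha
      have : k - (k - a) = a := by omega
      rw [this]
  have key : 2 * Pz h k = ∑ μ ∈ Finset.Icc 1 (k-1), (((h*μ/k : ℕ) : ℤ) + ((h*(k-μ)/k : ℕ) : ℤ)) := by
    rw [Finset.sum_add_distrib, two_mul]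
    nth_rewrite 2 [refl]
    rfl
  rw [key, Finset.sum_congr rfl (fun μ hμ => by
    obtain ⟨hμ1, hμ2⟩ := mem_Icc.mp hμ
    exact divPair h k μ hh hk cop hμ1 hμ2)]
  rw [Finset.sum_const, Nat.card_Icc, nsmul_eq_mul]
  have : ((k - 1 + 1 - 1 : ℕ) : ℤ) = (k:ℤ) - 1 := by
    have : k - 1 + 1 - 1 = k - 1 := by omega
    rw [this, Nat.cast_sub hk]; norm_num
  rw [this]; ring


lemma lPerm (h k : ℕ) (hk : 0 < k) (cop : Nat.Coprime h k) :
    ∑ μ ∈ Finset.Icc 1 (k-1), ((h*μ % k : ℕ) : ℤ)^2 = Sz k := by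
  rcases Nat.lt_or_ge k 2 with hk2 | hk2
  · have : k = 1 := by omega
    subst this
    simp [Sz]
  haveI : NeZero k := ⟨by omega⟩
  set u : (ZMod k)ˣ := ZMod.unitOfCoprime h cop with hu
  have hcast : ∀ μ : ℕ, ((u : ZMod k) * (μ : ZMod k)).val = h * μ % k := by
    intro μ
    rw [hu, ZMod.coe_unitOfCoprime, ← Nat.cast_mul, ZMod.val_natCast]
  have hne : ∀ a : ℕ, a ∈ Finset.Icc 1 (k-1) → ((a : ZMod k) ≠ 0) := by
    intro a ha
    obtain ⟨ha1, ha2⟩ := mem_Icc.mp ha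
    rw [Ne, ZMod.natCast_eq_zero_iff]
    intro hd
    have := Nat.le_of_dvd (by omega) hd
    omega
  unfold Sz
  refine Finset.sum_nbij' (fun μ => ((u : ZMod k) * (μ : ZMod k)).val)
    (fun μ => (((u⁻¹ : (ZMod k)ˣ) : ZMod k) * (μ : ZMod k)).val) ?_ ?_ ?_ ?_ ?_
  · intro a ha
    rw [mem_Icc]
    have hlt := ZMod.val_lt ((u : ZMod k) * (a : ZMod k))
    have hnz : ((u : ZMod k) * (a : ZMod k)) ≠ 0 := by
      intro hz
      exact hne a ha ((Units.mul_right_eq_zero u).mp hz)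
    have : ((u : ZMod k) * (a : ZMod k)).val ≠ 0 := by
      rw [Ne, ZMod.val_eq_zero]; exact hnz
    omega
  · intro a ha
    rw [mem_Icc]
    have hlt := ZMod.val_lt (((u⁻¹ : (ZMod k)ˣ) : ZMod k) * (a : ZMod k))
    have hnz : (((u⁻¹ : (ZMod k)ˣ) : ZMod k) * (a : ZMod k)) ≠ 0 := by
      intro hz
      exact hne a ha ((Units.mul_right_eq_zero u⁻¹).mp hz)
    have : (((u⁻¹ : (ZMod k)ˣ) : ZMod k) * (a : ZMod k)).val ≠ 0 := by
      rw [Ne, ZMod.val_eq_zero]; exact hnz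
    omega
  · intro a ha
    obtain ⟨ha1, ha2⟩ := mem_Icc.mp ha
    rw [ZMod.natCast_val]
    rw [ZMod.cast_id]
    rw [← mul_assoc, ← Units.val_mul, inv_mul_cancel, Units.val_one, one_mul]
    exact ZMod.val_natCast_of_lt (by omega)
  · intro a ha
    obtain ⟨ha1, ha2⟩ := mem_Icc.mp ha
    rw [ZMod.natCast_val, ZMod.cast_id]
    rw [← mul_assoc, ← Units.val_mul, mul_inv_cancel, Units.val_one, one_mul]
    exact ZMod.val_natCast_of_lt (by omega)
  · intro a ha
    rw [hcast a]

lemma lA (h k : ℕ) (hk : 0 < k) (cop : Nat.Coprime h k) :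
    2 * (k:ℤ) * (h:ℤ) * Fz h k = ((h:ℤ)^2 - 1) * Sz k + (k:ℤ)^2 * Qz h k := by
  have point : ∀ μ ∈ Finset.Icc 1 (k-1),
      (h:ℤ)^2 * (μ:ℤ)^2 =
        2*(k:ℤ)*(h:ℤ) * ((μ:ℤ) * ((h*μ/k : ℕ) : ℤ)) - (k:ℤ)^2 * ((h*μ/k : ℕ) : ℤ)^2
          + ((h*μ % k : ℕ) : ℤ)^2 := by
    intro μ _
    have hz : (k:ℤ) * ((h*μ/k : ℕ):ℤ) + ((h*μ%k : ℕ):ℤ) = (h:ℤ) * (μ:ℤ) := by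
      exact_mod_cast Nat.div_add_mod (h*μ) k
    linear_combination ((k:ℤ) * ((h*μ/k : ℕ):ℤ) - (h:ℤ)*(μ:ℤ) - ((h*μ%k : ℕ):ℤ)) * hz
  have expand : (h:ℤ)^2 * Sz k =
      2*(k:ℤ)*(h:ℤ) * Fz h k - (k:ℤ)^2 * Qz h k
        + ∑ μ ∈ Finset.Icc 1 (k-1), ((h*μ % k : ℕ) : ℤ)^2 := by
    unfold Sz Fz Qz
    rw [Finset.mul_sum, Finset.sum_congr rfl point]
    rw [Finset.sum_add_distrib, Finset.sum_sub_distrib, ← Finset.mul_sum, ← Finset.mul_sum]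
  rw [lPerm h k hk cop] at expand
  linarith

lemma qfilter (h k μ : ℕ) (hh : 0 < h) (hk : 0 < k) (cop : Nat.Coprime h k)
    (h1 : 1 ≤ μ) (h2 : μ ≤ k-1) :
    Finset.filter (fun ν => k*ν < h*μ) (Finset.Icc 1 (h-1)) = Finset.Icc 1 (h*μ/k) := by
  ext ν
  simp only [Finset.mem_filter, Finset.mem_Icc]
  constructor
  · rintro ⟨⟨hν1, _⟩, hlt⟩
    refine ⟨hν1, (Nat.le_div_iff_mul_le hk).mpr ?_⟩
    rw [Nat.mul_comm]
    omega
  · rintro ⟨hν1, hle⟩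
    have hmul : ν * k ≤ h * μ := (Nat.le_div_iff_mul_le hk).mp hle
    have hne : ν * k ≠ h * μ := by
      intro he
      exact notdvd h k μ cop h1 h2 ⟨ν, by rw [← he, Nat.mul_comm]⟩
    have hlt : k * ν < h * μ := by rw [Nat.mul_comm]; omega
    have hdivlt : h * μ / k < h := by
      apply (Nat.div_lt_iff_lt_mul hk).mpr
      have hμk : μ < k := by omega
      calc h * μ < h * k := by exact (mul_lt_mul_iff_right₀ hh).mpr hμk
        _ = h * k := rfl
    exact ⟨⟨hν1, by omega⟩, hlt⟩

lemma cfilter (h k ν : ℕ) (hh : 0 < h) (hk : 0 < k) (h1 : 1 ≤ ν) (h2 : ν ≤ h-1) :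
    Finset.filter (fun μ => k*ν < h*μ) (Finset.Icc 1 (k-1)) = Finset.Icc (k*ν/h + 1) (k-1) := by
  ext μ
  simp only [Finset.mem_filter, Finset.mem_Icc]
  constructor
  · rintro ⟨⟨_, hμ2⟩, hlt⟩
    refine ⟨?_, hμ2⟩
    have : k*ν/h < μ := (Nat.div_lt_iff_lt_mul hh).mpr (by rw [Nat.mul_comm μ h]; exact hlt)
    omega
  · rintro ⟨hge, hμ2⟩
    have hlt' : k*ν < μ * h := (Nat.div_lt_iff_lt_mul hh).mp hge
    have hlt : k*ν < h*μ := by rw [Nat.mul_comm h μ]; exact hlt'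
    exact ⟨⟨le_trans (Nat.le_add_left 1 _) hge, hμ2⟩, hlt⟩

lemma cdivlt (h k ν : ℕ) (hh : 0 < h) (hk : 0 < k) (h2 : ν ≤ h-1) : k*ν/h ≤ k - 1 := by
  have : k*ν/h < k := by
    apply (Nat.div_lt_iff_lt_mul hh).mpr
    have hνh : ν < h := by omega
    calc k*ν < k*h := (mul_lt_mul_iff_right₀ hk).mpr hνh
      _ = k*h := rfl
  omega

lemma lB (h k : ℕ) (hh : 0 < h) (hk : 0 < k) (cop : Nat.Coprime h k) :
    Qz h k = ((h:ℤ)-1)^2 * ((k:ℤ)-1) - 2 * Fz k h + Pz k h := by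
  have step1 : ∀ μ ∈ Finset.Icc 1 (k-1), ((h*μ/k : ℕ):ℤ)^2 =
      ∑ ν ∈ Finset.Icc 1 (h-1), (if k*ν < h*μ then 2*(ν:ℤ)-1 else 0) := by
    intro μ hμ
    obtain ⟨hμ1, hμ2⟩ := mem_Icc.mp hμ
    rw [← Finset.sum_filter, qfilter h k μ hh hk cop hμ1 hμ2, gaussOdd]
  have step2 : Qz h k = ∑ ν ∈ Finset.Icc 1 (h-1), ∑ μ ∈ Finset.Icc 1 (k-1),
      (if k*ν < h*μ then 2*(ν:ℤ)-1 else 0) := by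
    unfold Qz
    rw [Finset.sum_congr rfl step1, Finset.sum_comm]
  have step3 : ∀ ν ∈ Finset.Icc 1 (h-1),
      (∑ μ ∈ Finset.Icc 1 (k-1), (if k*ν < h*μ then 2*(ν:ℤ)-1 else 0)) =
      (2*(ν:ℤ)-1) * ((k:ℤ) - 1 - ((k*ν/h : ℕ):ℤ)) := by
    intro ν hν
    obtain ⟨hν1, hν2⟩ := mem_Icc.mp hν
    rw [← Finset.sum_filter, cfilter h k ν hh hk hν1 hν2, Finset.sum_const, Nat.card_Icc,
      nsmul_eq_mul]
    have hble := cdivlt h k ν hh hk hν2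
    have : ((k - 1 + 1 - (k*ν/h + 1) : ℕ) : ℤ) = (k:ℤ) - 1 - ((k*ν/h : ℕ):ℤ) := by
      have he : k - 1 + 1 - (k*ν/h + 1) = (k-1) - (k*ν/h) := by omega
      rw [he, Nat.cast_sub hble, Nat.cast_sub hk]
      push_cast; ring
    rw [this]; ring
  have step4 : Qz h k = ∑ ν ∈ Finset.Icc 1 (h-1),
      (2*(ν:ℤ)-1) * ((k:ℤ) - 1 - ((k*ν/h : ℕ):ℤ)) := step2.trans (Finset.sum_congr rfl step3)
  have step5 : Qz h k = ((k:ℤ)-1) * (∑ ν ∈ Finset.Icc 1 (h-1), (2*(ν:ℤ)-1))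
      - 2 * Fz k h + Pz k h := by
    rw [step4]
    unfold Fz Pz
    rw [Finset.mul_sum, Finset.mul_sum, ← Finset.sum_sub_distrib, ← Finset.sum_add_distrib]
    apply Finset.sum_congr rfl
    intro ν _
    ring
  rw [gaussOdd] at step5
  have : ((h - 1 : ℕ) : ℤ) = (h:ℤ) - 1 := by rw [Nat.cast_sub hh]; norm_num
  rw [this] at step5
  linarith

lemma lD (h k : ℕ) (hk : 0 < k) :
    Dz h k = 4*(h:ℤ)*Sz k - 2*(h:ℤ)*(k:ℤ)*Tz k - 4*(k:ℤ)*Fz h k + 2*(k:ℤ)^2*Pz h k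
      - 2*(k:ℤ)*Tz k + (k:ℤ)^2*((k:ℤ)-1) := by
  have point : ∀ μ ∈ Finset.Icc 1 (k-1),
      (2*(h:ℤ)*(μ:ℤ) - 2*(k:ℤ)*((h*μ/k : ℕ) : ℤ) - (k:ℤ)) * (2*(μ:ℤ) - (k:ℤ)) =
      4*(h:ℤ)*((μ:ℤ)^2) - 2*(h:ℤ)*(k:ℤ)*(μ:ℤ) - 4*(k:ℤ)*((μ:ℤ)*((h*μ/k : ℕ) : ℤ))
        + 2*(k:ℤ)^2*((h*μ/k : ℕ) : ℤ) - 2*(k:ℤ)*(μ:ℤ) + (k:ℤ)^2 := by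
    intro μ _
    ring
  unfold Dz
  rw [Finset.sum_congr rfl point]
  unfold Sz Tz Fz Pz
  simp only [Finset.sum_add_distrib, Finset.sum_sub_distrib, ← Finset.mul_sum,
    Finset.sum_const, Nat.card_Icc, nsmul_eq_mul]
  have : ((k - 1 + 1 - 1 : ℕ) : ℤ) = (k:ℤ) - 1 := by
    have he : k - 1 + 1 - 1 = k - 1 := by omega
    rw [he, Nat.cast_sub hk]; norm_num
  rw [this]
  ring

lemma lded (h k : ℕ) (hh : 0 < h) (hk : 0 < k) (cop : Nat.Coprime h k) :
    4*(k:ℝ)^2 * dedekindSum h k = ((Dz h k : ℤ) : ℝ) := by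
  have hk0 : (k:ℝ) ≠ 0 := by exact_mod_cast hk.ne'
  have hsub : Finset.Icc 1 (k-1) ⊆ Finset.Icc 1 k := Finset.Icc_subset_Icc_right (by omega)
  have hzero : ∀ x ∈ Finset.Icc 1 k, x ∉ Finset.Icc 1 (k-1) →
      sawtooth ((h * x : ℝ) / k) * sawtooth ((x : ℝ) / k) = 0 := by
    intro x hx hnx
    simp only [mem_Icc] at hx hnx
    have hxk : x = k := by omega
    subst hxk
    have : sawtooth ((x : ℝ) / x) = 0 := by
      rw [div_self (by exact_mod_cast hk.ne')]
      unfold sawtooth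
      rw [dif_pos ⟨1, by norm_num⟩]
    rw [this, mul_zero]
  unfold dedekindSum
  rw [← Finset.sum_subset hsub hzero]
  unfold Dz
  rw [Int.cast_sum, Finset.mul_sum]
  apply Finset.sum_congr rfl
  intro μ hμ
  obtain ⟨hμ1, hμ2⟩ := mem_Icc.mp hμ
  have hnd := notdvd h k μ cop hμ1 hμ2
  set q : ℕ := h*μ/k with hq
  have hcn : ((h:ℝ)*(μ:ℝ)) = ((h*μ : ℕ) : ℝ) := by push_cast; ring
  have hfl : ⌊((h*μ : ℕ) : ℝ)/(k:ℝ)⌋ = ((q : ℕ) : ℤ) := by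
    rw [← Int.natCast_floor_eq_floor (by positivity), Nat.floor_div_eq_div, hq]
  have hni : ¬ ∃ n : ℤ, ((h:ℝ)*(μ:ℝ))/(k:ℝ) = n := by
    rintro ⟨n, hn⟩
    apply hnd
    have hreal : ((h*μ : ℕ) : ℝ) = (n : ℝ) * k := by
      rw [← hcn]
      field_simp at hn
      linarith [hn]
    have hz : ((h*μ : ℕ) : ℤ) = n * k := by exact_mod_cast hreal
    have : (k:ℤ) ∣ ((h*μ : ℕ) : ℤ) := ⟨n, by linarith [hz]⟩
    exact_mod_cast this
  have hs1 : sawtooth ((h * μ : ℝ) / k) = ((h*μ:ℕ) : ℝ)/k - ((q:ℕ) : ℝ) - 1/2 := by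
    unfold sawtooth
    rw [dif_neg hni, Int.fract, hcn, hfl]
    norm_cast
  have hs2 : sawtooth ((μ : ℝ) / k) = (μ:ℝ)/k - 1/2 := by
    have hb1 : (0:ℝ) ≤ (μ:ℝ)/k := by positivity
    have hb2 : (μ:ℝ)/k < 1 := by
      rw [div_lt_one (by positivity)]
      exact_mod_cast (by omega : μ < k)
    unfold sawtooth
    rw [dif_neg, Int.fract_eq_self.mpr ⟨hb1, hb2⟩]
    rintro ⟨n, hn⟩
    rw [hn] at hb1 hb2
    have : (0:ℤ) ≤ n := by exact_mod_cast hb1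
    have : n < 1 := by exact_mod_cast hb2
    have hn0 : n = 0 := by omega
    rw [hn0] at hn
    simp only [Int.cast_zero] at hn
    have : μ = 0 := by
      field_simp at hn
      exact_mod_cast hn
    omega
  rw [hs1, hs2]
  push_cast
  field_simp
  ring

end DedekindAux

open DedekindAux in
/-- The Dedekind sum reciprocity formula: for coprime positive integers `r, b`,
`s(r/b) + s(b/r) = -1/4 + (1/12)(r/b + b/r + 1/(rb))`. -/
theorem dedekindSum_reciprocity (r b : ℕ) (hr : 0 < r) (hb : 0 < b)
    (hrb : Nat.Coprime r b) :
    dedekindSum r b + dedekindSum b r =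
      -(1 / 4 : ℝ) + (1 / 12) * ((r : ℝ) / b + (b : ℝ) / r + 1 / (r * b)) := by
  have e1 := lded r b hr hb hrb
  have e2 := lded b r hb hr hrb.symm
  have key : 3*(r:ℤ)^2 * Dz r b + 3*(b:ℤ)^2 * Dz b r
      = (r:ℤ)^3*(b:ℤ) + (r:ℤ)*(b:ℤ)^3 + (r:ℤ)*(b:ℤ) - 3*(r:ℤ)^2*(b:ℤ)^2 := by
    linear_combination (-3*(r:ℤ)^3*(b:ℤ) - 3*(r:ℤ)^2*(b:ℤ)) * lT b hb
      + (-3*(r:ℤ)*(b:ℤ)^3 - 3*(r:ℤ)*(b:ℤ)^2) * lT r hr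
      + ((r:ℤ)^3 + (r:ℤ)) * lS b hb
      + (2*(b:ℤ)^3) * lS r hr
      + (3*(r:ℤ)^2*(b:ℤ)^2) * lP r b hr hb hrb
      + (3*(r:ℤ)^2*(b:ℤ)^2 - 3*(r:ℤ)*(b:ℤ)^2) * lP b r hb hr hrb.symm
      + (-6*(r:ℤ)) * lA r b hb hrb
      + (-6*(r:ℤ)*(b:ℤ)^2) * lB r b hr hb hrb
      + (3*(r:ℤ)^2) * lD r b hb
      + (3*(b:ℤ)^2) * lD b r hr
  have keyR : 3*(r:ℝ)^2*((Dz r b : ℤ):ℝ) + 3*(b:ℝ)^2*((Dz b r : ℤ):ℝ)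
      = (r:ℝ)^3*(b:ℝ) + (r:ℝ)*(b:ℝ)^3 + (r:ℝ)*(b:ℝ) - 3*(r:ℝ)^2*(b:ℝ)^2 := by
    exact_mod_cast key
  have hr0 : (r:ℝ) ≠ 0 := by exact_mod_cast hr.ne'
  have hb0 : (b:ℝ) ≠ 0 := by exact_mod_cast hb.ne'
  have d1 : dedekindSum r b = ((Dz r b : ℤ):ℝ) / (4*(b:ℝ)^2) := by
    rw [eq_div_iff (by positivity)]
    linarith [e1]
  have d2 : dedekindSum b r = ((Dz b r : ℤ):ℝ) / (4*(r:ℝ)^2) := by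
    rw [eq_div_iff (by positivity)]
    linarith [e2]
  rw [d1, d2]
  field_simp
  linear_combination (4:ℝ) * keyR
end

section
/- Littlewood's Tauberian theorem: if c_n are complex numbers with c_n = O(1/n) and lim_{r→1⁻} ∑_{n=0}^∞ c_n r^n = a, then ∑_{n=0}^∞ c_n converges to a. -/
open Filter Finset Topology Polynomial

noncomputable section

lemma exp_neg_one_pos : (0:ℝ) < Real.exp (-1) := Real.exp_pos _
lemma exp_neg_one_lt_one : Real.exp (-1) < 1 := Real.exp_lt_one_iff.2 (by norm_num)

/-- Upper polynomial majorant of `h(t) = t⁻¹ • 1_{[e⁻¹,1]}(t)` with integral ≤ 1+ε. -/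
lemma exists_upper_poly (ε : ℝ) (hε : 0 < ε) :
    ∃ q : Polynomial ℝ, (∀ t ∈ Set.Icc (0:ℝ) 1, 0 ≤ q.eval t) ∧
      (∀ t ∈ Set.Icc (Real.exp (-1)) 1, t⁻¹ ≤ q.eval t) ∧
      (∫ t in (0:ℝ)..1, q.eval t) ≤ 1 + ε := by
  set c := Real.exp (-1) with hc
  have hc0 : (0:ℝ) < c := exp_neg_one_pos
  have hc1 : c < 1 := exp_neg_one_lt_one
  have hcinv : c⁻¹ = Real.exp 1 := by rw [hc, Real.exp_neg, inv_inv]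
  have he1 : (1:ℝ) ≤ Real.exp 1 := by
    have := Real.add_one_le_exp (1:ℝ); linarith
  have hepos : (0:ℝ) < Real.exp 1 := Real.exp_pos _
  set δ : ℝ := min (ε / (4 * Real.exp 1)) (c/2) with hδdef
  have hδ0 : 0 < δ := lt_min (by positivity) (by positivity)
  have hδc : δ ≤ c/2 := min_le_right _ _
  have hδε : Real.exp 1 * δ ≤ ε/4 := by
    have h1 : δ ≤ ε / (4 * Real.exp 1) := min_le_left _ _
    calc Real.exp 1 * δ ≤ Real.exp 1 * (ε / (4 * Real.exp 1)) := by
          exact mul_le_mul_of_nonneg_left h1 hepos.le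
      _ = ε/4 := by field_simp
  set hq : ℝ → ℝ := fun t => max 0 (min ((t - (c - δ)) * (Real.exp 1/δ)) (max t c)⁻¹) with hhq
  have hmaxpos : ∀ t : ℝ, 0 < max t c := fun t => lt_of_lt_of_le hc0 (le_max_right _ _)
  have hcont : Continuous hq := by
    apply continuous_const.max
    apply Continuous.min (by fun_prop)
    exact ((continuous_id.max continuous_const).inv₀ (fun t => (hmaxpos t).ne'))
  have hq0 : ∀ t, 0 ≤ hq t := fun t => le_max_left _ _
  have hqe : ∀ t, hq t ≤ Real.exp 1 := by
    intro t
    have h2 : (max t c)⁻¹ ≤ Real.exp 1 := by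
      rw [← hcinv]
      exact inv_anti₀ hc0 (le_max_right _ _)
    exact max_le (by positivity) (le_trans (min_le_right _ _) h2)
  have hq_eq_inv : ∀ t ∈ Set.Icc c 1, hq t = t⁻¹ := by
    intro t ht
    have htc : c ≤ t := ht.1
    have ht0 : 0 < t := lt_of_lt_of_le hc0 htc
    have hmax : max t c = t := max_eq_left htc
    have hinv_le : t⁻¹ ≤ (t - (c - δ)) * (Real.exp 1/δ) := by
      have h1 : t⁻¹ ≤ c⁻¹ := inv_anti₀ hc0 htc
      have h2 : (c:ℝ)⁻¹ = Real.exp 1 := hcinv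
      have h3 : δ ≤ t - (c - δ) := by linarith
      have h4 : Real.exp 1 ≤ (t - (c - δ)) * (Real.exp 1/δ) := by
        calc Real.exp 1 = δ * (Real.exp 1/δ) := by field_simp
          _ ≤ (t - (c - δ)) * (Real.exp 1/δ) := by
              exact mul_le_mul_of_nonneg_right h3 (by positivity)
      linarith
    rw [hhq]
    simp only [hmax]
    rw [min_eq_right hinv_le, max_eq_right (by positivity)]
  have hq_zero : ∀ t ∈ Set.Icc (0:ℝ) (c - δ), hq t = 0 := by
    intro t ht
    have : (t - (c - δ)) * (Real.exp 1/δ) ≤ 0 := by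
      apply mul_nonpos_of_nonpos_of_nonneg
      · linarith [ht.2]
      · positivity
    rw [hhq]
    simp only
    rw [max_eq_left]
    exact le_trans (min_le_left _ _) this
  -- integral of hq
  have hint : ∀ a b : ℝ, IntervalIntegrable hq MeasureTheory.volume a b :=
    fun a b => hcont.intervalIntegrable a b
  have hcδ0 : (0:ℝ) ≤ c - δ := by linarith
  have hI1 : (∫ t in (0:ℝ)..(c-δ), hq t) = 0 := by
    rw [intervalIntegral.integral_congr (g := fun _ => (0:ℝ)), intervalIntegral.integral_const]
    · simp
    · intro t ht
      rw [Set.uIcc_of_le hcδ0] at ht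
      exact hq_zero t ht
  have hI2 : (∫ t in (c-δ)..c, hq t) ≤ Real.exp 1 * δ := by
    have : (∫ t in (c-δ)..c, hq t) ≤ ∫ t in (c-δ)..c, Real.exp 1 := by
      apply intervalIntegral.integral_mono_on (by linarith) (hint _ _)
        (intervalIntegrable_const)
      intro t _; exact hqe t
    rw [intervalIntegral.integral_const] at this
    calc (∫ t in (c-δ)..c, hq t) ≤ (c - (c - δ)) • Real.exp 1 := this
      _ = Real.exp 1 * δ := by simp [smul_eq_mul]; ring
  have hI3 : (∫ t in c..1, hq t) = 1 := by
    rw [intervalIntegral.integral_congr (g := fun t => t⁻¹)]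
    · rw [integral_inv]
      · rw [one_div, hc, Real.exp_neg, inv_inv, Real.log_exp]
      · rw [Set.uIcc_of_le hc1.le]
        intro h0; exact absurd h0.1 (by linarith)
    · intro t ht
      rw [Set.uIcc_of_le hc1.le] at ht
      exact hq_eq_inv t ht
  have hIq : (∫ t in (0:ℝ)..1, hq t) ≤ 1 + ε/4 := by
    have e1 : (∫ t in (0:ℝ)..1, hq t)
        = (∫ t in (0:ℝ)..(c-δ), hq t) + (∫ t in (c-δ)..c, hq t) + (∫ t in c..1, hq t) := by
      rw [intervalIntegral.integral_add_adjacent_intervals (hint _ _) (hint _ _),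
        intervalIntegral.integral_add_adjacent_intervals (hint _ _) (hint _ _)]
    rw [e1, hI1, hI3]
    linarith
  -- Weierstrass
  obtain ⟨q, hqap⟩ := exists_polynomial_near_of_continuousOn 0 1 (fun t => hq t + ε/8)
    (Continuous.continuousOn (by fun_prop)) (ε/8) (by linarith)
  refine ⟨q, ?_, ?_, ?_⟩
  · intro t ht
    have h1 := abs_lt.1 (hqap t ht)
    have h2 := hq0 t
    linarith [h1.1]
  · intro t ht
    have ht' : t ∈ Set.Icc (0:ℝ) 1 := ⟨le_trans hc0.le ht.1, ht.2⟩
    have h1 := abs_lt.1 (hqap t ht')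
    have h2 := hq_eq_inv t ht
    linarith [h1.1]
  · have hmono : (∫ t in (0:ℝ)..1, q.eval t) ≤ ∫ t in (0:ℝ)..1, (hq t + ε/4) := by
      apply intervalIntegral.integral_mono_on (by norm_num)
        (q.continuous.intervalIntegrable 0 1)
        ((hcont.add continuous_const).intervalIntegrable 0 1)
      intro t ht
      have h1 := abs_lt.1 (hqap t ht)
      show q.eval t ≤ hq t + ε/4
      linarith [h1.2]
    rw [intervalIntegral.integral_add (hint 0 1) intervalIntegrable_const,
      intervalIntegral.integral_const] at hmono
    simp only [smul_eq_mul] at hmono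
    linarith

/-- Lower polynomial minorant with integral ≥ 1-ε. -/
lemma exists_lower_poly (ε : ℝ) (hε : 0 < ε) :
    ∃ p : Polynomial ℝ, (∀ t ∈ Set.Icc (0:ℝ) 1, t < Real.exp (-1) → p.eval t ≤ 0) ∧
      (∀ t ∈ Set.Icc (Real.exp (-1)) 1, p.eval t ≤ t⁻¹) ∧
      1 - ε ≤ ∫ t in (0:ℝ)..1, p.eval t := by
  set c := Real.exp (-1) with hc
  have hc0 : (0:ℝ) < c := exp_neg_one_pos
  have hc1 : c < 1 := exp_neg_one_lt_one
  have hcinv : c⁻¹ = Real.exp 1 := by rw [hc, Real.exp_neg, inv_inv]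
  have hepos : (0:ℝ) < Real.exp 1 := Real.exp_pos _
  set δ : ℝ := min (ε / (8 * Real.exp 1)) ((1-c)/4) with hδdef
  have hδ0 : 0 < δ := lt_min (by positivity) (by linarith)
  have hδc : c + 2*δ ≤ 1 := by
    have := min_le_right (ε / (8 * Real.exp 1)) ((1-c)/4); linarith
  have hδε : 2 * Real.exp 1 * δ ≤ ε/4 := by
    have h1 : δ ≤ ε / (8 * Real.exp 1) := min_le_left _ _
    calc 2 * Real.exp 1 * δ ≤ 2 * Real.exp 1 * (ε / (8 * Real.exp 1)) := by
          exact mul_le_mul_of_nonneg_left h1 (by positivity)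
      _ = ε/4 := by field_simp; ring
  set hp : ℝ → ℝ := fun t => max 0 (min ((t - (c + δ)) * (Real.exp 1/δ)) (max t c)⁻¹) with hhp
  have hmaxpos : ∀ t : ℝ, 0 < max t c := fun t => lt_of_lt_of_le hc0 (le_max_right _ _)
  have hcont : Continuous hp := by
    apply continuous_const.max
    apply Continuous.min (by fun_prop)
    exact ((continuous_id.max continuous_const).inv₀ (fun t => (hmaxpos t).ne'))
  have hp0 : ∀ t, 0 ≤ hp t := fun t => le_max_left _ _
  have hp_le_inv : ∀ t, hp t ≤ (max t c)⁻¹ := by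
    intro t
    exact max_le (by positivity) (min_le_right _ _)
  have hp_zero : ∀ t, t < c + δ → hp t = 0 := by
    intro t ht
    have : (t - (c + δ)) * (Real.exp 1/δ) ≤ 0 := by
      apply mul_nonpos_of_nonpos_of_nonneg
      · linarith
      · positivity
    rw [hhp]; simp only
    rw [max_eq_left (le_trans (min_le_left _ _) this)]
  have hp_eq_inv : ∀ t ∈ Set.Icc (c + 2*δ) 1, hp t = t⁻¹ := by
    intro t ht
    have htc : c ≤ t := by linarith [ht.1]
    have ht0 : 0 < t := lt_of_lt_of_le hc0 htc
    have hmax : max t c = t := max_eq_left htc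
    have hinv_le : t⁻¹ ≤ (t - (c + δ)) * (Real.exp 1/δ) := by
      have h1 : t⁻¹ ≤ c⁻¹ := inv_anti₀ hc0 htc
      have h3 : δ ≤ t - (c + δ) := by linarith [ht.1]
      have h4 : Real.exp 1 ≤ (t - (c + δ)) * (Real.exp 1/δ) := by
        calc Real.exp 1 = δ * (Real.exp 1/δ) := by field_simp
          _ ≤ (t - (c + δ)) * (Real.exp 1/δ) := by
              exact mul_le_mul_of_nonneg_right h3 (by positivity)
      rw [hcinv] at h1; linarith
    rw [hhp]; simp only [hmax]
    rw [min_eq_right hinv_le, max_eq_right (by positivity)]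
  have hint : ∀ a b : ℝ, IntervalIntegrable hp MeasureTheory.volume a b :=
    fun a b => hcont.intervalIntegrable a b
  have hI1 : (0:ℝ) ≤ ∫ t in (0:ℝ)..(c+2*δ), hp t := by
    apply intervalIntegral.integral_nonneg (by linarith)
    intro t _; exact hp0 t
  have hI2 : (∫ t in (c+2*δ)..1, hp t) = Real.log 1 - Real.log (c + 2*δ) := by
    rw [intervalIntegral.integral_congr (g := fun t => t⁻¹)]
    · rw [integral_inv, Real.log_div (by norm_num) (by positivity)]
      rw [Set.uIcc_of_le hδc]
      intro h0; have := h0.1; linarith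
    · intro t ht
      rw [Set.uIcc_of_le hδc] at ht
      exact hp_eq_inv t ht
  have hlog : Real.log (c + 2*δ) ≤ -1 + 2 * Real.exp 1 * δ := by
    have h1 : c + 2*δ = c * (1 + 2*δ/c) := by field_simp
    rw [h1, Real.log_mul hc0.ne' (by positivity)]
    have h2 : Real.log c = -1 := by rw [hc, Real.log_exp]
    have h3 : Real.log (1 + 2*δ/c) ≤ 2*δ/c := by
      have := Real.log_le_sub_one_of_pos (x := 1 + 2*δ/c) (by positivity)
      linarith
    have h4 : 2*δ/c = 2 * Real.exp 1 * δ := by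
      rw [div_eq_mul_inv, hcinv]; ring
    rw [h2]; linarith [h3, h4.le, h4.ge]
  have hIp : 1 - ε/2 ≤ ∫ t in (0:ℝ)..1, hp t := by
    have e1 : (∫ t in (0:ℝ)..1, hp t)
        = (∫ t in (0:ℝ)..(c+2*δ), hp t) + (∫ t in (c+2*δ)..1, hp t) := by
      rw [intervalIntegral.integral_add_adjacent_intervals (hint _ _) (hint _ _)]
    rw [e1, hI2]
    simp only [Real.log_one]
    linarith
  obtain ⟨p, hpap⟩ := exists_polynomial_near_of_continuousOn 0 1 (fun t => hp t - ε/8)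
    (Continuous.continuousOn (by fun_prop)) (ε/8) (by linarith)
  refine ⟨p, ?_, ?_, ?_⟩
  · intro t ht htc
    have h1 := abs_lt.1 (hpap t ht)
    have h2 : hp t = 0 := hp_zero t (by linarith)
    linarith [h1.2]
  · intro t ht
    have ht' : t ∈ Set.Icc (0:ℝ) 1 := ⟨le_trans hc0.le ht.1, ht.2⟩
    have h1 := abs_lt.1 (hpap t ht')
    have ht0 : 0 < t := lt_of_lt_of_le hc0 ht.1
    have h2 : hp t ≤ t⁻¹ := by
      have := hp_le_inv t
      rwa [max_eq_left ht.1] at this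
    linarith [h1.2]
  · have hmono : (∫ t in (0:ℝ)..1, (hp t - ε/4)) ≤ ∫ t in (0:ℝ)..1, p.eval t := by
      apply intervalIntegral.integral_mono_on (by norm_num)
        ((hcont.sub continuous_const).intervalIntegrable 0 1)
        (p.continuous.intervalIntegrable 0 1)
      intro t ht
      have h1 := abs_lt.1 (hpap t ht)
      show hp t - ε/4 ≤ p.eval t
      linarith [h1.1]
    rw [intervalIntegral.integral_sub (hint 0 1) intervalIntegrable_const,
      intervalIntegral.integral_const] at hmono
    simp only [smul_eq_mul] at hmono
    linarith
noncomputable section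

lemma summable_geom_aux {g : ℕ → ℝ} {x M : ℝ} (hx0 : 0 ≤ x) (hx1 : x < 1)
    (h : ∀ n, |g n| ≤ M * x ^ n) : Summable g :=
  Summable.of_norm_bounded ((summable_geometric_of_lt_one hx0 hx1).mul_left M)
    (by simpa [Real.norm_eq_abs] using h)

section Karamata
variable {b : ℕ → ℝ} {B L : ℝ}

lemma summable_bpow (hb : ∀ n, |b n| ≤ B) {x : ℝ} (hx0 : 0 ≤ x) (hx1 : x < 1) :
    Summable (fun n => b n * x ^ n) := by
  apply summable_geom_aux hx0 hx1 (M := B)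
  intro n
  rw [abs_mul, abs_pow, abs_of_nonneg hx0]
  exact mul_le_mul_of_nonneg_right (hb n) (by positivity)

/-- Abel limit for `x^n * (x^n)^k` weights. -/
lemma abel_pow_limit (hb : ∀ n, |b n| ≤ B)
    (hA : Tendsto (fun x : ℝ => (1 - x) * ∑' n, b n * x ^ n) (𝓝[<] 1) (𝓝 L)) (k : ℕ) :
    Tendsto (fun x : ℝ => (1 - x) * ∑' n, b n * x ^ n * (x ^ n) ^ k) (𝓝[<] 1)
      (𝓝 (L / (k + 1))) := by
  have hIoo : Set.Ioo (0:ℝ) 1 ∈ 𝓝[<] (1:ℝ) :=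
    Ioo_mem_nhdsLT_of_mem ⟨by norm_num, le_refl 1⟩
  -- the auxiliary function
  set F : ℝ → ℝ := fun x => (∑ i ∈ range (k+1), x ^ i)⁻¹ *
      ((1 - x ^ (k+1)) * ∑' n, b n * (x ^ (k+1)) ^ n) with hF
  have hcomp : Tendsto (fun x : ℝ => x ^ (k+1)) (𝓝[<] (1:ℝ)) (𝓝[<] (1:ℝ)) := by
    rw [tendsto_nhdsWithin_iff]
    constructor
    · have : Tendsto (fun x : ℝ => x ^ (k+1)) (𝓝 (1:ℝ)) (𝓝 ((1:ℝ) ^ (k+1))) :=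
        (continuous_pow (k+1)).tendsto 1
      simpa using this.mono_left nhdsWithin_le_nhds
    · filter_upwards [hIoo] with x hx
      exact pow_lt_one₀ hx.1.le hx.2 (Nat.succ_ne_zero k)
  have h2 : Tendsto (fun x : ℝ => (1 - x ^ (k+1)) * ∑' n, b n * (x ^ (k+1)) ^ n)
      (𝓝[<] (1:ℝ)) (𝓝 L) := hA.comp hcomp
  have h1 : Tendsto (fun x : ℝ => (∑ i ∈ range (k+1), x ^ i)⁻¹) (𝓝[<] (1:ℝ))
      (𝓝 ((k+1:ℝ))⁻¹) := by
    have hcont : Tendsto (fun x : ℝ => ∑ i ∈ range (k+1), x ^ i) (𝓝 (1:ℝ))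
        (𝓝 (∑ i ∈ range (k+1), (1:ℝ) ^ i)) := by
      exact (continuous_finset_sum _ (fun i _ => continuous_pow i)).tendsto 1
    have h11 : (∑ i ∈ range (k+1), (1:ℝ) ^ i) = (k+1:ℝ) := by simp
    rw [h11] at hcont
    exact (hcont.inv₀ (by positivity)).mono_left nhdsWithin_le_nhds
  have hlim : Tendsto F (𝓝[<] (1:ℝ)) (𝓝 (L / (k+1))) := by
    have := h1.mul h2
    rw [div_eq_inv_mul]
    exact this
  apply hlim.congr'
  filter_upwards [hIoo] with x hx
  have hx0 : (0:ℝ) ≤ x := hx.1.le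
  have hx1 : x < 1 := hx.2
  have hsum_pos : 0 < ∑ i ∈ range (k+1), x ^ i := by
    apply Finset.sum_pos (fun i _ => pow_pos hx.1 i) ⟨0, by simp⟩
  have hgeom : (1 - x ^ (k+1)) = (∑ i ∈ range (k+1), x ^ i) * (1 - x) := by
    have := geom_sum_mul x (k+1)
    have h2 : (∑ i ∈ range (k+1), x ^ i) * (x - 1) = x ^ (k+1) - 1 := this
    nlinarith [h2]
  have htsum : (∑' n, b n * (x ^ (k+1)) ^ n) = ∑' n, b n * x ^ n * (x ^ n) ^ k := by
    apply tsum_congr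
    intro n
    have e : (x ^ (k+1)) ^ n = (x ^ n) ^ (k+1) := by
      rw [← pow_mul, ← pow_mul, Nat.mul_comm]
    rw [e, pow_succ' (x ^ n) k]
    ring
  rw [hF]
  simp only
  rw [htsum, hgeom]
  field_simp

/-- Abel limit for polynomial weights. -/
lemma abel_poly_limit (hb : ∀ n, |b n| ≤ B)
    (hA : Tendsto (fun x : ℝ => (1 - x) * ∑' n, b n * x ^ n) (𝓝[<] 1) (𝓝 L)) (p : ℝ[X]) :
    Tendsto (fun x : ℝ => (1 - x) * ∑' n, b n * x ^ n * p.eval (x ^ n)) (𝓝[<] 1)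
      (𝓝 (L * ∫ t in (0:ℝ)..1, p.eval t)) := by
  have hIoo : Set.Ioo (0:ℝ) 1 ∈ 𝓝[<] (1:ℝ) :=
    Ioo_mem_nhdsLT_of_mem ⟨by norm_num, le_refl 1⟩
  set d := p.natDegree + 1 with hd
  -- limit of the sum expression
  have hlim : Tendsto (fun x : ℝ => ∑ i ∈ range d,
      p.coeff i * ((1 - x) * ∑' n, b n * x ^ n * (x ^ n) ^ i)) (𝓝[<] (1:ℝ))
      (𝓝 (∑ i ∈ range d, p.coeff i * (L / (i+1)))) := by
    apply tendsto_finset_sum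
    intro i _
    exact (abel_pow_limit hb hA i).const_mul _
  have hval : (∑ i ∈ range d, p.coeff i * (L / (i+1))) = L * ∫ t in (0:ℝ)..1, p.eval t := by
    have hInt : (∫ t in (0:ℝ)..1, p.eval t)
        = ∑ i ∈ range d, p.coeff i * (1 / (i+1)) := by
      have e1 : ∀ t : ℝ, p.eval t = ∑ i ∈ range d, p.coeff i * t ^ i :=
        fun t => Polynomial.eval_eq_sum_range t
      calc (∫ t in (0:ℝ)..1, p.eval t) = ∫ t in (0:ℝ)..1, ∑ i ∈ range d, p.coeff i * t ^ i := by
            apply intervalIntegral.integral_congr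
            intro t _; exact e1 t
        _ = ∑ i ∈ range d, ∫ t in (0:ℝ)..1, p.coeff i * t ^ i := by
            apply intervalIntegral.integral_finset_sum
            intro i _
            exact (Continuous.intervalIntegrable (by fun_prop) _ _)
        _ = ∑ i ∈ range d, p.coeff i * (1 / (i+1)) := by
            apply Finset.sum_congr rfl
            intro i _
            rw [intervalIntegral.integral_const_mul, integral_pow]
            norm_num
    rw [hInt, Finset.mul_sum]
    apply Finset.sum_congr rfl
    intro i _
    ring
  rw [← hval]
  apply hlim.congr'
  filter_upwards [hIoo] with x hx
  have hx0 : (0:ℝ) ≤ x := hx.1.le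
  have hx1 : x < 1 := hx.2
  have hsum : ∀ i : ℕ, Summable (fun n => p.coeff i * (b n * x ^ n * (x ^ n) ^ i)) := by
    intro i
    apply summable_geom_aux hx0 hx1 (M := |p.coeff i| * B)
    intro n
    have h1 : (x ^ n) ^ i ≤ 1 := pow_le_one₀ (by positivity) (pow_le_one₀ hx0 hx1.le)
    have h2 : |p.coeff i * (b n * x ^ n * (x ^ n) ^ i)|
        = |p.coeff i| * |b n| * x ^ n * (x ^ n) ^ i := by
      rw [abs_mul, abs_mul, abs_mul, abs_pow, abs_pow, abs_of_nonneg hx0,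
        abs_of_nonneg (a := x ^ n) (by positivity)]
      ring
    rw [h2]
    calc |p.coeff i| * |b n| * x ^ n * (x ^ n) ^ i ≤ |p.coeff i| * |b n| * x ^ n * 1 := by
          apply mul_le_mul_of_nonneg_left h1 (by positivity)
      _ = |p.coeff i| * |b n| * x ^ n := by ring
      _ ≤ |p.coeff i| * B * x ^ n := by
          have := hb n
          have h3 : |p.coeff i| * |b n| ≤ |p.coeff i| * B :=
            mul_le_mul_of_nonneg_left this (abs_nonneg _)
          exact mul_le_mul_of_nonneg_right h3 (by positivity)
  have e2 : (∑' n, b n * x ^ n * p.eval (x ^ n))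
      = ∑ i ∈ range d, p.coeff i * ∑' n, b n * x ^ n * (x ^ n) ^ i := by
    calc (∑' n, b n * x ^ n * p.eval (x ^ n))
        = ∑' n, ∑ i ∈ range d, p.coeff i * (b n * x ^ n * (x ^ n) ^ i) := by
          apply tsum_congr; intro n
          rw [Polynomial.eval_eq_sum_range (x ^ n), Finset.mul_sum]
          apply Finset.sum_congr rfl; intro i _; ring
      _ = ∑ i ∈ range d, ∑' n, p.coeff i * (b n * x ^ n * (x ^ n) ^ i) :=
          Summable.tsum_finsetSum (fun i _ => hsum i)
      _ = ∑ i ∈ range d, p.coeff i * ∑' n, b n * x ^ n * (x ^ n) ^ i := by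
          apply Finset.sum_congr rfl; intro i _
          exact tsum_mul_left
  rw [e2, Finset.mul_sum]
  apply Finset.sum_congr rfl
  intro i _
  ring

end Karamata

theorem karamata_main (b : ℕ → ℝ) (B L : ℝ) (hb0 : ∀ n, 0 ≤ b n) (hbB : ∀ n, b n ≤ B)
    (hA : Tendsto (fun x : ℝ => (1 - x) * ∑' n, b n * x ^ n) (𝓝[<] 1) (𝓝 L)) :
    Tendsto (fun N : ℕ => (∑ n ∈ range N, b n) / N) atTop (𝓝 L) := by
  have hB0 : 0 ≤ B := le_trans (hb0 0) (hbB 0)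
  have habs : ∀ n, |b n| ≤ B := fun n => abs_le.2 ⟨by linarith [hb0 n], hbB n⟩
  have hIoo : Set.Ioo (0:ℝ) 1 ∈ 𝓝[<] (1:ℝ) :=
    Ioo_mem_nhdsLT_of_mem ⟨by norm_num, le_refl 1⟩
  have hL0 : 0 ≤ L := by
    apply ge_of_tendsto hA
    filter_upwards [hIoo] with x hx
    apply mul_nonneg (by linarith [hx.2])
    exact tsum_nonneg (fun n => mul_nonneg (hb0 n) (pow_nonneg hx.1.le n))
  set u : ℕ → ℝ := fun N => ((N:ℝ) + 2⁻¹)⁻¹ with hu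
  have hu0 : ∀ N, 0 < u N := fun N => by positivity
  set X : ℕ → ℝ := fun N => Real.exp (-(u N)) with hX
  have hX0 : ∀ N, 0 < X N := fun N => Real.exp_pos _
  have hX1 : ∀ N, X N < 1 := fun N => Real.exp_lt_one_iff.2 (by linarith [hu0 N])
  have hXpow : ∀ N n : ℕ, (X N) ^ n = Real.exp (-((n:ℝ) * u N)) := by
    intro N n
    rw [hX]; simp only
    rw [← Real.exp_nat_mul]; ring_nf
  have hXmem : ∀ N n : ℕ, n ≤ N → X N ^ n ∈ Set.Icc (Real.exp (-1)) 1 := by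
    intro N n hn
    refine ⟨?_, pow_le_one₀ (hX0 N).le (hX1 N).le⟩
    rw [hXpow]
    apply Real.exp_le_exp.2
    have h1 : (n:ℝ) * u N ≤ 1 := by
      rw [hu]; simp only
      rw [mul_inv_le_iff₀ (by positivity)]
      have : (n:ℝ) ≤ (N:ℝ) := Nat.cast_le.2 hn
      linarith
    linarith
  have hXsmall : ∀ N n : ℕ, N < n → X N ^ n < Real.exp (-1) := by
    intro N n hn
    rw [hXpow]
    apply Real.exp_lt_exp.2
    have h1 : 1 < (n:ℝ) * u N := by
      rw [hu]; simp only
      rw [lt_mul_inv_iff₀ (by positivity)]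
      have : (N:ℝ) + 1 ≤ (n:ℝ) := by exact_mod_cast hn
      linarith
    linarith
  -- convergence of X to 1 within Iio 1
  have hXlim : Tendsto X atTop (𝓝[<] (1:ℝ)) := by
    rw [tendsto_nhdsWithin_iff]
    constructor
    · have hu_lim : Tendsto u atTop (𝓝 0) := by
        apply Tendsto.inv_tendsto_atTop
        apply tendsto_atTop_add_const_right
        exact tendsto_natCast_atTop_atTop
      have : Tendsto (fun N => Real.exp (-(u N))) atTop (𝓝 (Real.exp (-0))) :=
        (Real.continuous_exp.tendsto _).comp (hu_lim.neg)
      simpa using this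
    · exact Eventually.of_forall (fun N => hX1 N)
  -- upper bound via upper polynomial
  have hupper : ∀ q : Polynomial ℝ, (∀ t ∈ Set.Icc (0:ℝ) 1, 0 ≤ q.eval t) →
      (∀ t ∈ Set.Icc (Real.exp (-1)) 1, t⁻¹ ≤ q.eval t) →
      ∀ N : ℕ, (∑ n ∈ range (N+1), b n) ≤ ∑' n, b n * X N ^ n * q.eval (X N ^ n) := by
    intro q hq0 hqinv N
    obtain ⟨M, hM⟩ : ∃ M : ℝ, ∀ t ∈ Set.Icc (0:ℝ) 1, |q.eval t| ≤ M := by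
      obtain ⟨M, hM⟩ := (isCompact_Icc (a := (0:ℝ)) (b := 1)).exists_bound_of_continuousOn
        q.continuous.continuousOn
      exact ⟨M, fun t ht => by simpa using hM t ht⟩
    have hxmem01 : ∀ n : ℕ, X N ^ n ∈ Set.Icc (0:ℝ) 1 :=
      fun n => ⟨by positivity, pow_le_one₀ (hX0 N).le (hX1 N).le⟩
    have hsum_rhs : Summable (fun n => b n * X N ^ n * q.eval (X N ^ n)) := by
      apply summable_geom_aux (hX0 N).le (hX1 N) (M := B * M)
      intro n
      rw [abs_mul, abs_mul, abs_pow, abs_of_nonneg (hX0 N).le]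
      calc |b n| * X N ^ n * |q.eval (X N ^ n)| ≤ B * X N ^ n * M := by
            apply mul_le_mul (mul_le_mul_of_nonneg_right (habs n) (by positivity))
              (hM _ (hxmem01 n)) (abs_nonneg _) (by positivity)
        _ = B * M * X N ^ n := by ring
    have hsum_lhs : Summable (fun n => if n ≤ N then b n else 0) := by
      apply summable_of_ne_finset_zero (s := range (N+1))
      intro n hn
      simp only [mem_range] at hn
      rw [if_neg (by omega)]
    have e1 : (∑ n ∈ range (N+1), b n) = ∑' n, (if n ≤ N then b n else 0) := by
      rw [tsum_eq_sum (s := range (N+1))]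
      · apply Finset.sum_congr rfl
        intro n hn
        simp only [mem_range] at hn
        rw [if_pos (by omega)]
      · intro n hn
        simp only [mem_range] at hn
        rw [if_neg (by omega)]
    rw [e1]
    apply Summable.tsum_le_tsum _ hsum_lhs hsum_rhs
    intro n
    by_cases hn : n ≤ N
    · rw [if_pos hn]
      have hmem := hXmem N n hn
      have hx0 : 0 < X N ^ n := by positivity
      have h1 : (X N ^ n)⁻¹ ≤ q.eval (X N ^ n) := hqinv _ hmem
      calc b n = b n * (X N ^ n * (X N ^ n)⁻¹) := by
            rw [mul_inv_cancel₀ hx0.ne', mul_one]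
        _ ≤ b n * (X N ^ n * q.eval (X N ^ n)) := by
            apply mul_le_mul_of_nonneg_left _ (hb0 n)
            exact mul_le_mul_of_nonneg_left h1 hx0.le
        _ = b n * X N ^ n * q.eval (X N ^ n) := by ring
    · rw [if_neg hn]
      exact mul_nonneg (mul_nonneg (hb0 n) (by positivity)) (hq0 _ (hxmem01 n))
  -- lower bound via lower polynomial
  have hlower : ∀ p : Polynomial ℝ, (∀ t ∈ Set.Icc (0:ℝ) 1, t < Real.exp (-1) → p.eval t ≤ 0) →
      (∀ t ∈ Set.Icc (Real.exp (-1)) 1, p.eval t ≤ t⁻¹) →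
      ∀ N : ℕ, (∑' n, b n * X N ^ n * p.eval (X N ^ n)) ≤ ∑ n ∈ range (N+1), b n := by
    intro p hp0 hpinv N
    obtain ⟨M, hM⟩ : ∃ M : ℝ, ∀ t ∈ Set.Icc (0:ℝ) 1, |p.eval t| ≤ M := by
      obtain ⟨M, hM⟩ := (isCompact_Icc (a := (0:ℝ)) (b := 1)).exists_bound_of_continuousOn
        p.continuous.continuousOn
      exact ⟨M, fun t ht => by simpa using hM t ht⟩
    have hxmem01 : ∀ n : ℕ, X N ^ n ∈ Set.Icc (0:ℝ) 1 :=
      fun n => ⟨by positivity, pow_le_one₀ (hX0 N).le (hX1 N).le⟩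
    have hsum_lhs : Summable (fun n => b n * X N ^ n * p.eval (X N ^ n)) := by
      apply summable_geom_aux (hX0 N).le (hX1 N) (M := B * M)
      intro n
      rw [abs_mul, abs_mul, abs_pow, abs_of_nonneg (hX0 N).le]
      calc |b n| * X N ^ n * |p.eval (X N ^ n)| ≤ B * X N ^ n * M := by
            apply mul_le_mul (mul_le_mul_of_nonneg_right (habs n) (by positivity))
              (hM _ (hxmem01 n)) (abs_nonneg _) (by positivity)
        _ = B * M * X N ^ n := by ring
    have hsum_rhs : Summable (fun n => if n ≤ N then b n else 0) := by
      apply summable_of_ne_finset_zero (s := range (N+1))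
      intro n hn
      simp only [mem_range] at hn
      rw [if_neg (by omega)]
    have e1 : (∑ n ∈ range (N+1), b n) = ∑' n, (if n ≤ N then b n else 0) := by
      rw [tsum_eq_sum (s := range (N+1))]
      · apply Finset.sum_congr rfl
        intro n hn
        simp only [mem_range] at hn
        rw [if_pos (by omega)]
      · intro n hn
        simp only [mem_range] at hn
        rw [if_neg (by omega)]
    rw [e1]
    apply Summable.tsum_le_tsum _ hsum_lhs hsum_rhs
    intro n
    by_cases hn : n ≤ N
    · rw [if_pos hn]
      have hmem := hXmem N n hn
      have hx0 : 0 < X N ^ n := by positivity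
      have h1 : p.eval (X N ^ n) ≤ (X N ^ n)⁻¹ := hpinv _ hmem
      calc b n * X N ^ n * p.eval (X N ^ n) ≤ b n * X N ^ n * (X N ^ n)⁻¹ := by
            apply mul_le_mul_of_nonneg_left h1 (mul_nonneg (hb0 n) hx0.le)
        _ = b n := by
            rw [mul_assoc, mul_inv_cancel₀ hx0.ne', mul_one]
    · rw [if_neg hn]
      have h1 : p.eval (X N ^ n) ≤ 0 := hp0 _ (hxmem01 n) (hXsmall N n (by omega))
      exact mul_nonpos_of_nonneg_of_nonpos (mul_nonneg (hb0 n) (by positivity)) h1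
  -- main squeeze
  have hmain : Tendsto (fun N : ℕ => (1 - X N) * ∑ n ∈ range (N+1), b n) atTop (𝓝 L) := by
    rw [Metric.tendsto_atTop]
    intro ε hε
    have hL1 : (0:ℝ) < L + 1 := by linarith
    set ε' : ℝ := ε / (4 * (L + 1)) with hε'
    have hε'0 : 0 < ε' := div_pos hε (by linarith)
    have hLε' : L * ε' ≤ ε / 4 := by
      rw [hε']
      rw [div_eq_mul_inv, ← mul_assoc]
      have h1 : L * ε ≤ (L+1) * ε := by nlinarith
      calc L * ε * (4 * (L+1))⁻¹ ≤ (L+1) * ε * (4 * (L+1))⁻¹ :=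
            mul_le_mul_of_nonneg_right h1 (by positivity)
        _ = ε / 4 := by field_simp
    obtain ⟨q, hq0, hqinv, hqint⟩ := exists_upper_poly ε' hε'0
    obtain ⟨p, hp0, hpinv, hpint⟩ := exists_lower_poly ε' hε'0
    have hq_lim : Tendsto (fun N : ℕ => (1 - X N) * ∑' n, b n * X N ^ n * q.eval (X N ^ n))
        atTop (𝓝 (L * ∫ t in (0:ℝ)..1, q.eval t)) :=
      (abel_poly_limit habs hA q).comp hXlim
    have hp_lim : Tendsto (fun N : ℕ => (1 - X N) * ∑' n, b n * X N ^ n * p.eval (X N ^ n))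
        atTop (𝓝 (L * ∫ t in (0:ℝ)..1, p.eval t)) :=
      (abel_poly_limit habs hA p).comp hXlim
    rw [Metric.tendsto_atTop] at hq_lim hp_lim
    obtain ⟨N₁, hN₁⟩ := hq_lim (ε/4) (by linarith)
    obtain ⟨N₂, hN₂⟩ := hp_lim (ε/4) (by linarith)
    refine ⟨max N₁ N₂, fun N hN => ?_⟩
    have h1 := hN₁ N (le_trans (le_max_left _ _) hN)
    have h2 := hN₂ N (le_trans (le_max_right _ _) hN)
    rw [Real.dist_eq, abs_lt] at h1 h2 ⊢
    have h1x : 0 ≤ 1 - X N := by linarith [hX1 N]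
    have hub := mul_le_mul_of_nonneg_left (hupper q hq0 hqinv N) h1x
    have hlb := mul_le_mul_of_nonneg_left (hlower p hp0 hpinv N) h1x
    have hqI : L * (∫ t in (0:ℝ)..1, q.eval t) ≤ L * (1 + ε') :=
      mul_le_mul_of_nonneg_left hqint hL0
    have hpI : L * (1 - ε') ≤ L * (∫ t in (0:ℝ)..1, p.eval t) :=
      mul_le_mul_of_nonneg_left hpint hL0
    constructor
    · nlinarith [h2.1, hlb, hpI]
    · nlinarith [h1.2, hub, hqI]
  -- the factor (N+1)(1 - X N) tends to 1
  have hfactor : Tendsto (fun N : ℕ => ((N:ℝ) + 1) * (1 - X N)) atTop (𝓝 1) := by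
    have hder : HasDerivAt (fun t : ℝ => 1 - Real.exp (-t)) 1 0 := by
      have h1 : HasDerivAt (fun t : ℝ => -t) (-1) 0 := (hasDerivAt_id 0).neg
      have h2 : HasDerivAt (fun t : ℝ => Real.exp (-t)) (Real.exp (-0) * (-1)) 0 :=
        (Real.hasDerivAt_exp (-0)).comp 0 h1
      have h3 := (hasDerivAt_const 0 (1:ℝ)).sub h2
      have h4 : HasDerivAt (fun t : ℝ => 1 - Real.exp (-t)) (0 - Real.exp (-0) * -1) 0 := h3; simpa using h4
    have hslope := hasDerivAt_iff_tendsto_slope.1 hder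
    have hu_lim : Tendsto u atTop (𝓝[≠] (0:ℝ)) := by
      rw [tendsto_nhdsWithin_iff]
      constructor
      · apply Tendsto.inv_tendsto_atTop
        apply tendsto_atTop_add_const_right
        exact tendsto_natCast_atTop_atTop
      · exact Eventually.of_forall (fun N => (hu0 N).ne')
    have hcomp := hslope.comp hu_lim
    have hhalf : Tendsto (fun N : ℕ => 1 + u N / 2) atTop (𝓝 1) := by
      have hu_lim0 : Tendsto u atTop (𝓝 0) := by
        apply Tendsto.inv_tendsto_atTop
        apply tendsto_atTop_add_const_right
        exact tendsto_natCast_atTop_atTop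
      have := (hu_lim0.div_const 2).const_add 1
      simpa using this
    have hcore : Tendsto (fun N : ℕ => (1 - Real.exp (-(u N)))/(u N)) atTop (𝓝 1) := by
      apply hcomp.congr
      intro N
      simp [slope_def_field, Real.exp_zero]
    have := hcore.mul hhalf
    rw [mul_one] at this
    apply this.congr
    intro N
    have huN : u N ≠ 0 := (hu0 N).ne'
    have e1 : ((N:ℝ) + 1) = (u N)⁻¹ + 2⁻¹ := by
      rw [hu]; simp only
      rw [inv_inv]; ring
    rw [hX]; simp only
    rw [e1]
    field_simp
  -- combine
  have hXne : ∀ N, (1 - X N) ≠ 0 := fun N => by linarith [hX1 N]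
  have hdiv := hmain.div hfactor one_ne_zero
  rw [div_one] at hdiv
  have hdiv' : Tendsto (fun N : ℕ => (∑ n ∈ range (N+1), b n) / ((N:ℝ) + 1)) atTop (𝓝 L) := by
    apply hdiv.congr
    intro N
    simp only [Pi.div_apply]
    rw [mul_comm ((N:ℝ)+1) (1 - X N), mul_div_mul_left _ _ (hXne N)]
  rw [← tendsto_add_atTop_iff_nat 1]
  apply hdiv'.congr
  intro N
  push_cast
  ring_nf
open Filter Finset Topology

lemma hardy_identity (c : ℕ → ℂ) (N : ℕ) : ∀ M, N ≤ M →
    (∑ k ∈ range M, (∑ n ∈ range k, c n)) - (∑ k ∈ range N, (∑ n ∈ range k, c n))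
      = (M - N : ℕ) • (∑ n ∈ range N, c n) + ∑ j ∈ Ico N M, ((M:ℂ) - 1 - j) * c j := by
  intro M
  induction M with
  | zero => intro h; interval_cases N; simp
  | succ M ih =>
    intro hNM
    rcases Nat.lt_or_ge M N with h | h
    · have hNM' : N = M + 1 := le_antisymm hNM h
      subst hNM'
      simp
    · have hid := ih h
      have h2 : ∑ j ∈ Ico N (M+1), (((M:ℕ):ℂ) + 1 - 1 - j) * c j
          = ∑ j ∈ Ico N M, ((M:ℂ) - 1 - j) * c j + ∑ j ∈ Ico N M, c j
            + (((M:ℂ) + 1) - 1 - M) * c M := by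
        rw [Finset.sum_Ico_succ_top h]
        rw [← Finset.sum_add_distrib]
        congr 1
        apply Finset.sum_congr rfl
        intro j _; ring
      have h4 : ∑ j ∈ Ico N M, c j = (∑ n ∈ range M, c n) - ∑ n ∈ range N, c n :=
        Finset.sum_Ico_eq_sub _ h
      have h5 : (M + 1 - N : ℕ) = (M - N : ℕ) + 1 := by omega
      rw [Finset.sum_range_succ (fun k => ∑ n ∈ range k, c n), h5, succ_nsmul]
      push_cast
      rw [h2, h4]
      rw [nsmul_eq_mul] at hid ⊢
      linear_combination hid

theorem hardy_tauberian (c : ℕ → ℂ) (C : ℝ) (a : ℂ) (hC0 : 0 ≤ C)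
    (hc : ∀ n : ℕ, 1 ≤ n → ‖c n‖ ≤ C / n)
    (hσ : Tendsto (fun N : ℕ => ((N:ℂ))⁻¹ * ∑ k ∈ range N, (∑ n ∈ range k, c n))
      atTop (𝓝 a)) :
    Tendsto (fun N : ℕ => ∑ n ∈ range N, c n) atTop (𝓝 a) := by
  set s : ℕ → ℂ := fun N => ∑ n ∈ range N, c n with hs
  set T : ℕ → ℂ := fun N => ∑ k ∈ range N, s k with hT
  set σ : ℕ → ℂ := fun N => ((N:ℂ))⁻¹ * T N with hσdef
  rw [Metric.tendsto_atTop]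
  intro ε hε
  set δ : ℝ := ε / (4 * (C + 1)) with hδdef
  have hδ0 : 0 < δ := by positivity
  have hCδ : C * δ ≤ ε / 4 := by
    rw [hδdef]
    rw [div_eq_mul_inv, ← mul_assoc]
    have h1 : C * ε ≤ (C+1) * ε := by nlinarith
    calc C * ε * (4 * (C+1))⁻¹ ≤ (C+1) * ε * (4 * (C+1))⁻¹ :=
          mul_le_mul_of_nonneg_right h1 (by positivity)
      _ = ε / 4 := by field_simp
  set ε₂ : ℝ := ε / (4 * (1 + 2/δ)) with hε₂def
  have hε₂0 : 0 < ε₂ := by positivity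
  rw [Metric.tendsto_atTop] at hσ
  obtain ⟨N₀, hN₀⟩ := hσ ε₂ hε₂0
  set N₁ : ℕ := max 1 ⌈4 * (C + 1) / ε⌉₊ with hN₁def
  refine ⟨max N₀ N₁, fun N hN => ?_⟩
  have hNN₀ : N₀ ≤ N := le_trans (le_max_left _ _) hN
  have hN1 : 1 ≤ N := le_trans (le_trans (le_max_left _ _) (le_max_right N₀ N₁)) hN
  have hNR1 : (1:ℝ) ≤ (N:ℝ) := by exact_mod_cast hN1
  have hNR0 : (0:ℝ) < (N:ℝ) := by linarith
  have hCN : C / N ≤ ε / 4 := by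
    have h1 : (⌈4 * (C + 1) / ε⌉₊ : ℝ) ≤ N := by
      have : ⌈4 * (C + 1) / ε⌉₊ ≤ N := le_trans (le_trans (le_max_right 1 _) (le_max_right N₀ N₁)) hN
      exact_mod_cast this
    have h2 : 4 * (C + 1) / ε ≤ (N:ℝ) := le_trans (Nat.le_ceil _) h1
    rw [div_le_iff₀ hNR0]
    rw [div_le_iff₀ hε] at h2
    calc C ≤ C + 1 := by linarith
      _ = (4 * (C+1) / 4 : ℝ) := by ring
      _ ≤ (N:ℝ) * ε / 4 := by linarith
      _ = ε / 4 * N := by ring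
  -- the window
  set K : ℕ := ⌊δ * N⌋₊ + 1 with hKdef
  set M : ℕ := N + K with hMdef
  have hK1 : 1 ≤ K := Nat.le_add_left 1 _
  have hKR0 : (0:ℝ) < (K:ℝ) := by exact_mod_cast hK1
  have hKlb : δ * N ≤ (K:ℝ) := by
    have := Nat.lt_floor_add_one (δ * N)
    push_cast [hKdef]
    push_cast at this
    linarith
  have hKub : (K:ℝ) ≤ δ * N + 1 := by
    have h1 : (⌊δ * N⌋₊ : ℝ) ≤ δ * N := Nat.floor_le (by positivity)
    push_cast [hKdef]
    linarith
  have hKpos : 0 < δ * (N:ℝ) := by positivity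
  -- the identity
  have hid := hardy_identity c N M (Nat.le_add_right N K)
  have hMN : M - N = K := by omega
  rw [hMN, nsmul_eq_mul] at hid
  -- E bound
  set E : ℂ := ∑ j ∈ Ico N M, ((M:ℂ) - 1 - j) * c j with hE
  have hEbound : ‖E‖ ≤ (K:ℝ) * (K * (C / N)) := by
    rw [hE]
    calc ‖∑ j ∈ Ico N M, ((M:ℂ) - 1 - j) * c j‖
        ≤ ∑ j ∈ Ico N M, ‖((M:ℂ) - 1 - j) * c j‖ := norm_sum_le _ _
      _ ≤ ∑ j ∈ Ico N M, (K:ℝ) * (C / N) := by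
          apply Finset.sum_le_sum
          intro j hj
          rw [mem_Ico] at hj
          rw [norm_mul]
          have hcast : ((M:ℂ) - 1 - j) = (((M:ℝ) - 1 - j : ℝ) : ℂ) := by push_cast; ring
          rw [hcast, Complex.norm_real]
          have hjR : (N:ℝ) ≤ (j:ℝ) := by exact_mod_cast hj.1
          have hjR2 : (j:ℝ) ≤ (M:ℝ) - 1 := by
            have : j + 1 ≤ M := hj.2
            have := (Nat.cast_le (α := ℝ)).2 this
            push_cast at this
            linarith
          have hMR : (M:ℝ) = (N:ℝ) + K := by push_cast [hMdef]; ring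
          have h1 : ‖(M:ℝ) - 1 - (j:ℝ)‖ ≤ (K:ℝ) := by
            rw [Real.norm_eq_abs, abs_of_nonneg (by linarith)]
            linarith
          have hj1 : 1 ≤ j := le_trans hN1 hj.1
          have hjR0 : (0:ℝ) < (j:ℝ) := by exact_mod_cast Nat.lt_of_lt_of_le Nat.zero_lt_one hj1
          have h2 : ‖c j‖ ≤ C / N := by
            calc ‖c j‖ ≤ C / j := hc j hj1
              _ ≤ C / N := by
                  apply div_le_div_of_nonneg_left hC0 hNR0 hjR
          exact mul_le_mul h1 h2 (norm_nonneg _) (by positivity)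
      _ = (K:ℝ) * (K * (C / N)) := by
          rw [Finset.sum_const, Nat.card_Ico, hMN]
          simp [smul_eq_mul, mul_assoc]
  -- relate T and σ
  have hTσ : ∀ m : ℕ, 1 ≤ m → (T m : ℂ) = (m:ℂ) * σ m := by
    intro m hm
    rw [hσdef]
    simp only
    rw [← mul_assoc, mul_inv_cancel₀ (Nat.cast_ne_zero.2 (by omega)), one_mul]
  have hM1 : 1 ≤ M := by omega
  have key : (K:ℂ) * (s N - a) = (M:ℂ) * (σ M - a) - (N:ℂ) * (σ N - a) - E := by
    rw [mul_sub, mul_sub, mul_sub, ← hTσ M hM1, ← hTσ N hN1]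
    have hMc : (M:ℂ) = (N:ℂ) + (K:ℂ) := by push_cast [hMdef]; ring
    rw [hMc]
    linear_combination -hid
  have hσM : ‖σ M - a‖ ≤ ε₂ := by
    have := hN₀ M (le_trans hNN₀ (by omega))
    rw [dist_eq_norm] at this
    exact this.le
  have hσN : ‖σ N - a‖ ≤ ε₂ := by
    have := hN₀ N hNN₀
    rw [dist_eq_norm] at this
    exact this.le
  have hnorm : (K:ℝ) * ‖s N - a‖ ≤ (M:ℝ) * ‖σ M - a‖ + (N:ℝ) * ‖σ N - a‖ + ‖E‖ := by
    calc (K:ℝ) * ‖s N - a‖ = ‖(K:ℂ) * (s N - a)‖ := by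
          rw [norm_mul, Complex.norm_natCast]
      _ = ‖(M:ℂ) * (σ M - a) - (N:ℂ) * (σ N - a) - E‖ := by rw [key]
      _ ≤ ‖(M:ℂ) * (σ M - a) - (N:ℂ) * (σ N - a)‖ + ‖E‖ := norm_sub_le _ _
      _ ≤ ‖(M:ℂ) * (σ M - a)‖ + ‖(N:ℂ) * (σ N - a)‖ + ‖E‖ := by
          linarith [norm_sub_le ((M:ℂ) * (σ M - a)) ((N:ℂ) * (σ N - a))]
      _ = (M:ℝ) * ‖σ M - a‖ + (N:ℝ) * ‖σ N - a‖ + ‖E‖ := by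
          rw [norm_mul, norm_mul, Complex.norm_natCast, Complex.norm_natCast]
  have hMR : (M:ℝ) = (N:ℝ) + (K:ℝ) := by push_cast [hMdef]; ring
  have hNK : (N:ℝ) ≤ (K:ℝ) / δ := by
    rw [le_div_iff₀ hδ0]
    linarith [hKlb]
  have e2val : (1 + 2/δ) * ε₂ = ε/4 := by
    rw [hε₂def]
    have h1 : (1 + 2/δ) ≠ 0 := by positivity
    field_simp
  have step2 : ((N:ℝ) + K) * ε₂ + (N:ℝ) * ε₂ ≤ (K:ℝ) * (ε/4) := by
    have h2NK : 2*(N:ℝ) + K ≤ (K:ℝ) * (1 + 2/δ) := by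
      have he : (K:ℝ) * (1 + 2/δ) = K + 2*((K:ℝ)/δ) := by field_simp
      rw [he]
      have h3 : (K:ℝ)/δ ≥ (N:ℝ) := hNK
      linarith
    calc ((N:ℝ) + K) * ε₂ + (N:ℝ) * ε₂ = (2*(N:ℝ) + K) * ε₂ := by ring
      _ ≤ ((K:ℝ) * (1 + 2/δ)) * ε₂ := mul_le_mul_of_nonneg_right h2NK hε₂0.le
      _ = (K:ℝ) * ((1 + 2/δ) * ε₂) := by ring
      _ = (K:ℝ) * (ε/4) := by rw [e2val]
  have step3 : (K:ℝ) * ((K:ℝ) * (C/N)) ≤ (K:ℝ) * (ε/2) := by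
    apply mul_le_mul_of_nonneg_left _ hKR0.le
    have h1 : (K:ℝ) * (C/N) ≤ (δ*N + 1) * (C/N) :=
      mul_le_mul_of_nonneg_right hKub (by positivity)
    have h2 : (δ*(N:ℝ) + 1) * (C/N) = C*δ + C/N := by field_simp
    rw [h2] at h1
    linarith
  have hfinal : (K:ℝ) * ‖s N - a‖ < (K:ℝ) * ε := by
    have hb1 : (M:ℝ) * ‖σ M - a‖ ≤ ((N:ℝ) + K) * ε₂ := by
      rw [← hMR]
      apply mul_le_mul_of_nonneg_left hσM (by positivity)
    have hb2 : (N:ℝ) * ‖σ N - a‖ ≤ (N:ℝ) * ε₂ :=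
      mul_le_mul_of_nonneg_left hσN (by positivity)
    calc (K:ℝ) * ‖s N - a‖ ≤ (M:ℝ) * ‖σ M - a‖ + (N:ℝ) * ‖σ N - a‖ + ‖E‖ := hnorm
      _ ≤ ((N:ℝ) + K) * ε₂ + (N:ℝ) * ε₂ + (K:ℝ) * ((K:ℝ) * (C/N)) := by
          linarith [hEbound]
      _ ≤ (K:ℝ) * (ε/4) + (K:ℝ) * (ε/2) := by linarith
      _ < (K:ℝ) * ε := by nlinarith
  rw [dist_eq_norm]
  exact lt_of_mul_lt_mul_left hfinal hKR0.le

lemma bdd_of_eventually_bdd (g : ℕ → ℝ) : ∀ (N₂ : ℕ), (∃ M, ∀ N, N₂ ≤ N → g N ≤ M) →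
    ∃ M', ∀ N, g N ≤ M' := by
  intro N₂
  induction N₂ with
  | zero => rintro ⟨M, hM⟩; exact ⟨M, fun N => hM N (Nat.zero_le N)⟩
  | succ k ih =>
    rintro ⟨M, hM⟩
    apply ih
    refine ⟨max M (g k), fun N hN => ?_⟩
    rcases Nat.eq_or_lt_of_le hN with h | h
    · rw [← h]; exact le_max_right _ _
    · exact le_trans (hM N h) (le_max_left _ _)

/-- Littlewood's Tauberian theorem: if `c n = O(1/n)` and the Abel means
`∑ c_n r^n` tend to `a` as `r → 1⁻`, then `∑ c_n` converges to `a`. -/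
theorem littlewood_tauberian (c : ℕ → ℂ) (a : ℂ)
    (hbound : ∃ C : ℝ, ∀ n : ℕ, 1 ≤ n → ‖c n‖ ≤ C / n)
    (habel : Tendsto (fun r : ℝ => ∑' n : ℕ, c n * (r : ℂ) ^ n)
      (nhdsWithin 1 (Set.Iio 1)) (nhds a)) :
    Tendsto (fun N : ℕ => ∑ n ∈ Finset.range N, c n) atTop (nhds a) := by
  classical
  obtain ⟨C, hC⟩ := hbound
  have hC0 : 0 ≤ C := by
    have h1 := hC 1 le_rfl
    simp only [Nat.cast_one, div_one] at h1
    linarith [norm_nonneg (c 1)]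
  set f : ℝ → ℂ := fun r => ∑' n : ℕ, c n * (r : ℂ) ^ n with hf
  set s : ℕ → ℂ := fun N => ∑ n ∈ Finset.range N, c n with hsdef
  set D : ℝ := max ‖c 0‖ C with hD
  have hcD : ∀ n, ‖c n‖ ≤ D := by
    intro n
    rcases Nat.eq_zero_or_pos n with h | h
    · rw [h]; exact le_max_left _ _
    · refine le_trans (hC n h) (le_trans ?_ (le_max_right _ _))
      rw [div_le_iff₀ (by exact_mod_cast h)]
      have h1 : (1:ℝ) ≤ (n:ℝ) := by exact_mod_cast h
      nlinarith
  have hsummable : ∀ x : ℝ, 0 ≤ x → x < 1 → Summable (fun n => c n * (x:ℂ)^n) := by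
    intro x hx0 hx1
    apply Summable.of_norm_bounded
      ((summable_geometric_of_lt_one hx0 hx1).mul_left D)
    intro n
    rw [norm_mul, norm_pow, Complex.norm_real, Real.norm_eq_abs, abs_of_nonneg hx0]
    exact mul_le_mul_of_nonneg_right (hcD n) (by positivity)
  -- Step 1: partial sums are bounded
  obtain ⟨Ms, hMs0, hMs⟩ : ∃ Ms, 0 ≤ Ms ∧ ∀ N, ‖s N‖ ≤ Ms := by
    obtain ⟨δ₁, hδ₁0, hδ₁⟩ := (Metric.tendsto_nhdsWithin_nhds.1 habel) 1 one_pos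
    have key : ∀ N : ℕ, 2 ≤ N → (1:ℝ)/N < δ₁ → ‖s N‖ ≤ 2*C + ‖a‖ + 1 := by
      intro N hN2 hNδ
      set r : ℝ := 1 - 1/N with hr
      have hN0 : (0:ℝ) < (N:ℝ) := by positivity
      have hNR2 : (2:ℝ) ≤ (N:ℝ) := by exact_mod_cast hN2
      have hr0 : 0 ≤ r := by
        rw [hr]
        have : (1:ℝ)/N ≤ 1/2 := by
          apply div_le_div_of_nonneg_left one_pos.le (by norm_num) hNR2
        linarith
      have hr1 : r < 1 := by
        rw [hr]; have : (0:ℝ) < 1/N := by positivity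
        linarith
      have hfr : dist (f r) a < 1 := by
        apply hδ₁ (by exact hr1)
        rw [Real.dist_eq, hr]
        have h9 : (0:ℝ) < 1/N := by positivity
        have e9 : (1 - 1/(N:ℝ)) - 1 = -(1/N) := by ring
        rw [e9, abs_neg, abs_of_pos h9]
        exact hNδ
      have hrsub : (1:ℝ) - r = 1/N := by rw [hr]; ring
      -- first estimate
      have h1 : ‖s N - ∑ n ∈ Finset.range N, c n * (r:ℂ)^n‖ ≤ C := by
        have e1 : s N - ∑ n ∈ Finset.range N, c n * (r:ℂ)^n
            = ∑ n ∈ Finset.range N, c n * (1 - (r:ℂ)^n) := by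
          rw [hsdef]
          simp only
          rw [← Finset.sum_sub_distrib]
          apply Finset.sum_congr rfl
          intro n _; ring
        rw [e1]
        calc ‖∑ n ∈ Finset.range N, c n * (1 - (r:ℂ)^n)‖
            ≤ ∑ n ∈ Finset.range N, ‖c n * (1 - (r:ℂ)^n)‖ := norm_sum_le _ _
          _ ≤ ∑ n ∈ Finset.range N, C/N := by
              apply Finset.sum_le_sum
              intro n _
              rcases Nat.eq_zero_or_pos n with h | h
              · rw [h]; simp; positivity
              · rw [norm_mul]
                have hn1 : (1:ℝ) ≤ (n:ℝ) := by exact_mod_cast h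
                have hrn1 : r^n ≤ 1 := pow_le_one₀ hr0 hr1.le
                have hcast : (1 - (r:ℂ)^n) = (((1 - r^n : ℝ)):ℂ) := by push_cast; ring
                have hb : ‖(1 - (r:ℂ)^n)‖ ≤ (n:ℝ) * (1 - r) := by
                  rw [hcast, Complex.norm_real, Real.norm_eq_abs,
                    abs_of_nonneg (by linarith)]
                  have := one_add_mul_le_pow (a := r - 1) (by linarith) n
                  have h2 : 1 + (n:ℝ) * (r - 1) ≤ r^n := by
                    have e : (1:ℝ) + (r - 1) = r := by ring
                    rw [e] at this; exact this
                  linarith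
                calc ‖c n‖ * ‖(1 - (r:ℂ)^n)‖ ≤ (C/n) * ((n:ℝ) * (1 - r)) := by
                      exact mul_le_mul (hC n h) hb (norm_nonneg _)
                        (div_nonneg hC0 (Nat.cast_nonneg n))
                  _ = C * (1 - r) := by
                      field_simp
                  _ = C/N := by rw [hrsub]; ring
          _ = C := by
              rw [Finset.sum_const, Finset.card_range]
              rw [nsmul_eq_mul]
              field_simp
      -- second estimate
      have h2 : ‖f r - ∑ n ∈ Finset.range N, c n * (r:ℂ)^n‖ ≤ C := by
        have hsum := hsummable r hr0 hr1
        have e1 : (∑ n ∈ Finset.range N, c n * (r:ℂ)^n) + (∑' n : ℕ, c (n+N) * (r:ℂ)^(n+N))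
            = f r := Summable.sum_add_tsum_nat_add N hsum
        have e2 : f r - ∑ n ∈ Finset.range N, c n * (r:ℂ)^n
            = ∑' n : ℕ, c (n+N) * (r:ℂ)^(n+N) := by rw [← e1]; ring
        rw [e2]
        have hterm : ∀ n : ℕ, ‖c (n+N) * (r:ℂ)^(n+N)‖ ≤ (C/N) * r^n := by
          intro n
          rw [norm_mul, norm_pow, Complex.norm_real, Real.norm_eq_abs, abs_of_nonneg hr0]
          have hnN1 : 1 ≤ n + N := by omega
          have h3 := hC (n+N) hnN1
          push_cast at h3
          have h4 : C/((n:ℝ)+N) ≤ C/N := by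
            apply div_le_div_of_nonneg_left hC0 hN0
            linarith [Nat.cast_nonneg (α := ℝ) n]
          have h5 : r^(n+N) ≤ r^n := by
            rw [pow_add]
            calc r^n * r^N ≤ r^n * 1 :=
                mul_le_mul_of_nonneg_left (pow_le_one₀ hr0 hr1.le) (by positivity)
              _ = r^n := mul_one _
          have h6 : ‖c (n+N)‖ ≤ C/N := le_trans h3 h4
          exact mul_le_mul h6 h5 (by positivity) (by positivity)
        have hsumnorm : Summable (fun n : ℕ => ‖c (n+N) * (r:ℂ)^(n+N)‖) := by
          apply Summable.of_nonneg_of_le (fun n => norm_nonneg _) hterm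
          exact (summable_geometric_of_lt_one hr0 hr1).mul_left _
        calc ‖∑' n : ℕ, c (n+N) * (r:ℂ)^(n+N)‖ ≤ ∑' n : ℕ, ‖c (n+N) * (r:ℂ)^(n+N)‖ :=
              norm_tsum_le_tsum_norm hsumnorm
          _ ≤ ∑' n : ℕ, (C/N) * r^n := by
              apply Summable.tsum_le_tsum hterm hsumnorm
              exact (summable_geometric_of_lt_one hr0 hr1).mul_left _
          _ = (C/N) * (1 - r)⁻¹ := by
              rw [tsum_mul_left, tsum_geometric_of_lt_one hr0 hr1]
          _ = C := by
              rw [hrsub]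
              field_simp
      calc ‖s N‖ = ‖(s N - ∑ n ∈ Finset.range N, c n * (r:ℂ)^n)
            - (f r - ∑ n ∈ Finset.range N, c n * (r:ℂ)^n) + f r‖ := by congr 1; ring
        _ ≤ ‖(s N - ∑ n ∈ Finset.range N, c n * (r:ℂ)^n)
            - (f r - ∑ n ∈ Finset.range N, c n * (r:ℂ)^n)‖ + ‖f r‖ := norm_add_le _ _
        _ ≤ ‖s N - ∑ n ∈ Finset.range N, c n * (r:ℂ)^n‖
            + ‖f r - ∑ n ∈ Finset.range N, c n * (r:ℂ)^n‖ + ‖f r‖ := by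
              linarith [norm_sub_le (s N - ∑ n ∈ Finset.range N, c n * (r:ℂ)^n)
                (f r - ∑ n ∈ Finset.range N, c n * (r:ℂ)^n)]
        _ ≤ C + C + (‖a‖ + 1) := by
              have : ‖f r‖ ≤ ‖a‖ + 1 := by
                have := dist_triangle (f r) a 0
                rw [dist_eq_norm] at hfr
                calc ‖f r‖ = ‖(f r - a) + a‖ := by ring_nf
                  _ ≤ ‖f r - a‖ + ‖a‖ := norm_add_le _ _
                  _ ≤ ‖a‖ + 1 := by linarith
              linarith
        _ = 2*C + ‖a‖ + 1 := by ring
    set N₂ : ℕ := max 2 (⌈1/δ₁⌉₊ + 1) with hN₂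
    obtain ⟨M', hM'⟩ := bdd_of_eventually_bdd (fun N => ‖s N‖) N₂
      ⟨2*C + ‖a‖ + 1, by
        intro N hN
        apply key N (le_trans (le_max_left _ _) hN)
        have h1 : (⌈1/δ₁⌉₊ + 1 : ℕ) ≤ N := le_trans (le_max_right _ _) hN
        have h2 : 1/δ₁ < (N:ℝ) := by
          have h3 : (⌈1/δ₁⌉₊ : ℝ) + 1 ≤ N := by exact_mod_cast h1
          linarith [Nat.le_ceil (1/δ₁)]
        have hN0 : (0:ℝ) < N := lt_trans (by positivity) h2
        rw [div_lt_iff₀ hN0]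
        rw [div_lt_iff₀ hδ₁0] at h2
        linarith⟩
    exact ⟨max M' 0, le_max_right _ _, fun N => le_trans (hM' N) (le_max_left _ _)⟩
  -- summability of s-series
  have hsum_s : ∀ x : ℝ, 0 ≤ x → x < 1 → Summable (fun n => s n * (x:ℂ)^n) := by
    intro x hx0 hx1
    apply Summable.of_norm_bounded
      ((summable_geometric_of_lt_one hx0 hx1).mul_left Ms)
    intro n
    rw [norm_mul, norm_pow, Complex.norm_real, Real.norm_eq_abs, abs_of_nonneg hx0]
    exact mul_le_mul_of_nonneg_right (hMs n) (by positivity)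
  -- Abel identity for partial sums
  have hAbelS : ∀ x : ℝ, 0 ≤ x → x < 1 →
      (1 - (x:ℂ)) * ∑' n, s n * (x:ℂ)^n = (x:ℂ) * f x := by
    intro x hx0 hx1
    have hsum := hsum_s x hx0 hx1
    have hsum1 : Summable (fun n => s (n+1) * (x:ℂ)^(n+1)) := by
      have := (summable_nat_add_iff 1).2 hsum
      exact this
    have hsum2 : Summable (fun n => s n * (x:ℂ)^(n+1)) := by
      apply Summable.of_norm_bounded
        ((summable_geometric_of_lt_one hx0 hx1).mul_left Ms)
      intro n
      rw [norm_mul, norm_pow, Complex.norm_real, Real.norm_eq_abs, abs_of_nonneg hx0]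
      calc ‖s n‖ * x^(n+1) ≤ Ms * x^(n+1) :=
            mul_le_mul_of_nonneg_right (hMs n) (by positivity)
        _ ≤ Ms * x^n := by
            apply mul_le_mul_of_nonneg_left _ hMs0
            exact pow_le_pow_of_le_one hx0 hx1.le (by omega)
    have e0 : (∑' n, s n * (x:ℂ)^n) = ∑' n, s (n+1) * (x:ℂ)^(n+1) := by
      rw [Summable.tsum_eq_zero_add hsum]
      have : s 0 = 0 := by rw [hsdef]; simp
      rw [this]
      simp
    have e1 : (x:ℂ) * (∑' n, s n * (x:ℂ)^n) = ∑' n, s n * (x:ℂ)^(n+1) := by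
      rw [← tsum_mul_left]
      apply tsum_congr
      intro n; ring
    have e2 : (1 - (x:ℂ)) * ∑' n, s n * (x:ℂ)^n
        = (∑' n, s (n+1) * (x:ℂ)^(n+1)) - ∑' n, s n * (x:ℂ)^(n+1) := by
      rw [sub_mul, one_mul, e1, ← e0]
    rw [e2, ← Summable.tsum_sub hsum1 hsum2]
    have e3 : ∀ n : ℕ, s (n+1) * (x:ℂ)^(n+1) - s n * (x:ℂ)^(n+1) = c n * (x:ℂ)^(n+1) := by
      intro n
      have : s (n+1) = s n + c n := by
        rw [hsdef]; simp only
        rw [Finset.sum_range_succ]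
      rw [this]; ring
    calc (∑' n, (s (n+1) * (x:ℂ)^(n+1) - s n * (x:ℂ)^(n+1)))
        = ∑' n, c n * (x:ℂ)^(n+1) := by
          apply tsum_congr e3
      _ = (x:ℂ) * ∑' n, c n * (x:ℂ)^n := by
          rw [← tsum_mul_left]
          apply tsum_congr
          intro n; ring
  -- limit of x * f x
  have hxf : Tendsto (fun x : ℝ => (x:ℂ) * f x) (𝓝[<] 1) (𝓝 a) := by
    have h1 : Tendsto (fun x : ℝ => (x:ℂ)) (𝓝[<] (1:ℝ)) (𝓝 (1:ℂ)) := by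
      have := Complex.continuous_ofReal.tendsto (1:ℝ)
      exact this.mono_left nhdsWithin_le_nhds
    have := h1.mul habel
    rwa [one_mul] at this
  have hIoo : Set.Ioo (0:ℝ) 1 ∈ 𝓝[<] (1:ℝ) :=
    Ioo_mem_nhdsLT_of_mem ⟨by norm_num, le_refl 1⟩
  -- Karamata for images under a real-linear functional
  have hkar : ∀ (g : ℂ →L[ℝ] ℝ), (∀ z, |g z| ≤ ‖z‖) →
      Tendsto (fun N : ℕ => (∑ n ∈ Finset.range N, (g (s n) + Ms)) / N) atTop
        (𝓝 (g a + Ms)) := by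
    intro g hgabs
    apply karamata_main _ (2*Ms) _
      (fun n => by
        have h1 := abs_le.1 (le_trans (hgabs (s n)) (hMs n))
        linarith [h1.1])
      (fun n => by
        have h1 := abs_le.1 (le_trans (hgabs (s n)) (hMs n))
        linarith [h1.2])
    -- Abel condition
    have hlim : Tendsto (fun x : ℝ => g ((x:ℂ) * f x) + Ms) (𝓝[<] (1:ℝ))
        (𝓝 (g a + Ms)) := by
      have h1 : Tendsto (fun x : ℝ => g ((x:ℂ) * f x)) (𝓝[<] (1:ℝ)) (𝓝 (g a)) :=
        (g.continuous.tendsto a).comp hxf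
      exact h1.add_const Ms
    apply hlim.congr'
    filter_upwards [hIoo] with x hx
    have hx0 : (0:ℝ) ≤ x := hx.1.le
    have hx1 : x < 1 := hx.2
    have hsum := hsum_s x hx0 hx1
    have hsumg : Summable (fun n => g (s n) * x^n) := by
      apply summable_geom_aux hx0 hx1 (M := Ms)
      intro n
      rw [abs_mul, abs_pow, abs_of_nonneg hx0]
      apply mul_le_mul (le_trans (hgabs _) (hMs n)) le_rfl (by positivity) hMs0
    have hsumc : Summable (fun n : ℕ => Ms * x^n) :=
      (summable_geometric_of_lt_one hx0 hx1).mul_left Ms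
    have hsmul : ∀ (z : ℂ) (r : ℝ), g ((r:ℂ) * z) = r * g z := by
      intro z r
      rw [← Complex.real_smul, g.map_smul, smul_eq_mul]
    have e1 : (∑' n, (g (s n) + Ms) * x^n)
        = (∑' n, g (s n) * x^n) + Ms * (1-x)⁻¹ := by
      calc (∑' n, (g (s n) + Ms) * x^n)
          = ∑' n, (g (s n) * x^n + Ms * x^n) := by
            apply tsum_congr; intro n; ring
        _ = (∑' n, g (s n) * x^n) + ∑' n, Ms * x^n := Summable.tsum_add hsumg hsumc
        _ = (∑' n, g (s n) * x^n) + Ms * (1-x)⁻¹ := by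
            rw [tsum_mul_left, tsum_geometric_of_lt_one hx0 hx1]
    have e2 : (∑' n, g (s n) * x^n) = g (∑' n, s n * (x:ℂ)^n) := by
      calc (∑' n, g (s n) * x^n) = ∑' n, g (s n * (x:ℂ)^n) := by
            apply tsum_congr
            intro n
            have h : s n * (x:ℂ)^n = ((x^n : ℝ):ℂ) * s n := by push_cast; ring
            rw [h, hsmul]
            ring
        _ = g (∑' n, s n * (x:ℂ)^n) := (ContinuousLinearMap.map_tsum g hsum).symm
    have e3 : (1-x) * g (∑' n, s n * (x:ℂ)^n) = g ((x:ℂ) * f x) := by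
      rw [← hsmul]
      congr 1
      have hcast : (((1-x:ℝ)):ℂ) = 1 - (x:ℂ) := by push_cast; ring
      rw [hcast]
      exact hAbelS x hx0 hx1
    have hxne : (1:ℝ) - x ≠ 0 := by linarith
    rw [e1]
    rw [mul_add, e2, e3]
    rw [mul_comm Ms ((1-x)⁻¹), ← mul_assoc, mul_inv_cancel₀ hxne, one_mul]
  -- apply to re and im
  have hre0 := hkar Complex.reCLM (fun z => by
    simpa [Real.norm_eq_abs] using Complex.abs_re_le_norm z)
  have him0 := hkar Complex.imCLM (fun z => by
    simpa [Real.norm_eq_abs] using Complex.abs_im_le_norm z)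
  simp only [Complex.reCLM_apply, Complex.imCLM_apply] at hre0 him0
  have hsplit : ∀ (u : ℕ → ℝ) (N : ℕ),
      (∑ n ∈ Finset.range N, (u n + Ms)) = (∑ n ∈ Finset.range N, u n) + N * Ms := by
    intro u N
    rw [Finset.sum_add_distrib, Finset.sum_const, Finset.card_range, nsmul_eq_mul]
  have hconv : ∀ (u : ℕ → ℝ) (lim : ℝ),
      Tendsto (fun N : ℕ => (∑ n ∈ Finset.range N, (u n + Ms)) / N) atTop (𝓝 (lim + Ms)) →
      Tendsto (fun N : ℕ => (∑ n ∈ Finset.range N, u n) / N) atTop (𝓝 lim) := by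
    intro u lim h
    have h2 := h.sub_const Ms
    rw [add_sub_cancel_right] at h2
    apply h2.congr'
    filter_upwards [eventually_ge_atTop 1] with N hN
    have hN0 : (N:ℝ) ≠ 0 := by positivity
    rw [hsplit]
    field_simp
    ring
  have hre' := hconv _ _ hre0
  have him' := hconv _ _ him0
  -- assemble the complex Cesàro limit
  have hσc : Tendsto (fun N : ℕ => ((N:ℂ))⁻¹ * ∑ k ∈ Finset.range N,
      (∑ n ∈ Finset.range k, c n)) atTop (𝓝 a) := by
    have h1 := ((Complex.continuous_ofReal.tendsto _).comp hre').add
      (((Complex.continuous_ofReal.tendsto _).comp him').mul_const Complex.I)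
    rw [Complex.re_add_im] at h1
    apply h1.congr
    intro N
    have hT : (∑ k ∈ Finset.range N, s k)
        = (((∑ k ∈ Finset.range N, s k).re : ℂ)
          + ((∑ k ∈ Finset.range N, s k).im : ℂ) * Complex.I) := (Complex.re_add_im _).symm
    simp only [Function.comp_apply]
    have hre_sum : (∑ k ∈ Finset.range N, s k).re = ∑ k ∈ Finset.range N, (s k).re :=
      Complex.re_sum _ _
    have him_sum : (∑ k ∈ Finset.range N, s k).im = ∑ k ∈ Finset.range N, (s k).im :=
      Complex.im_sum _ _
    have e : (∑ k ∈ Finset.range N, (∑ n ∈ Finset.range k, c n)) = ∑ k ∈ Finset.range N, s k := rfl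
    rw [e, hT, hre_sum, him_sum]
    push_cast
    ring
  exact hardy_tauberian c C a hC0 hC hσc
end
end
end

section
/- For the Gauss map α(x) = {1/x} on X = (0,1)\ℚ, a number x ∈ X is a Wilton number if and only if α(x) is a Wilton number, and in that case W(x) = log(1/x) - x·W(α(x)). -/
open Real Filter Finset

/-- The Gauss map `α(x) = {1/x}`. -/
noncomputable def gaussMap (x : ℝ) : ℝ := Int.fract (1 / x)

/-- `γ_k(x) = β_{k-1}(x) · log(1/α_k(x))`, where `β_{k-1}(x) = ∏_{i<k} α_i(x)`
and `α_k` is the `k`-th iterate of the Gauss map. -/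
noncomputable def wiltonTerm (x : ℝ) (k : ℕ) : ℝ :=
  (∏ i ∈ Finset.range k, gaussMap^[i] x) * Real.log (1 / gaussMap^[k] x)

/-- `x` is a Wilton number if `∑_{k≥0} (-1)^k γ_k(x)` converges. -/
def IsWilton (x : ℝ) : Prop :=
  ∃ w : ℝ, Tendsto (fun K : ℕ => ∑ k ∈ Finset.range K, (-1 : ℝ) ^ k * wiltonTerm x k)
    atTop (nhds w)

lemma wiltonTerm_succ (x : ℝ) (k : ℕ) :
    wiltonTerm x (k + 1) = x * wiltonTerm (gaussMap x) k := by
  simp only [wiltonTerm, Finset.prod_range_succ', Function.iterate_succ_apply,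
    Function.iterate_zero_apply]
  ring

lemma sum_succ_eq (x : ℝ) (K : ℕ) :
    ∑ k ∈ Finset.range (K + 1), (-1 : ℝ) ^ k * wiltonTerm x k
      = Real.log (1 / x)
        - x * ∑ k ∈ Finset.range K, (-1 : ℝ) ^ k * wiltonTerm (gaussMap x) k := by
  rw [Finset.sum_range_succ']
  have h : ∀ k ∈ Finset.range K, (-1 : ℝ) ^ (k + 1) * wiltonTerm x (k + 1)
      = -(x * ((-1 : ℝ) ^ k * wiltonTerm (gaussMap x) k)) := by
    intro k _
    rw [wiltonTerm_succ]; ring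
  rw [Finset.sum_congr rfl h, Finset.sum_neg_distrib, ← Finset.mul_sum]
  simp [wiltonTerm]
  ring

/-- For irrational `x ∈ (0,1)`: `x` is a Wilton number iff `α(x)` is a Wilton number,
and in that case `W(x) = log(1/x) - x · W(α(x))`. -/
theorem wilton_iff_gaussMap_wilton (x : ℝ) (hx0 : 0 < x) (hx1 : x < 1)
    (hirr : Irrational x) :
    (IsWilton x ↔ IsWilton (gaussMap x)) ∧
    ∀ w w' : ℝ,
      Tendsto (fun K : ℕ => ∑ k ∈ Finset.range K, (-1 : ℝ) ^ k * wiltonTerm x k)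
        atTop (nhds w) →
      Tendsto (fun K : ℕ => ∑ k ∈ Finset.range K,
          (-1 : ℝ) ^ k * wiltonTerm (gaussMap x) k) atTop (nhds w') →
      w = Real.log (1 / x) - x * w' := by
  have hxne : x ≠ 0 := ne_of_gt hx0
  constructor
  · constructor
    · rintro ⟨w, hw⟩
      refine ⟨(Real.log (1 / x) - w) / x, ?_⟩
      have hw' : Tendsto (fun K : ℕ =>
          ∑ k ∈ Finset.range (K + 1), (-1 : ℝ) ^ k * wiltonTerm x k) atTop (nhds w) := by
        exact hw.comp (tendsto_add_atTop_nat 1)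
      have := hw'.congr (fun K => sum_succ_eq x K)
      -- from log(1/x) - x * S K → w, deduce S K → (log(1/x) - w)/x
      have h2 : Tendsto (fun K : ℕ =>
          (Real.log (1 / x) - (Real.log (1 / x)
            - x * ∑ k ∈ Finset.range K, (-1 : ℝ) ^ k * wiltonTerm (gaussMap x) k)) / x)
          atTop (nhds ((Real.log (1 / x) - w) / x)) :=
        ((tendsto_const_nhds.sub this).div_const x)
      refine h2.congr (fun K => ?_)
      field_simp
      ring
    · rintro ⟨w', hw'⟩
      refine ⟨Real.log (1 / x) - x * w', ?_⟩
      have h1 : Tendsto (fun K : ℕ =>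
          Real.log (1 / x) - x * ∑ k ∈ Finset.range K,
            (-1 : ℝ) ^ k * wiltonTerm (gaussMap x) k)
          atTop (nhds (Real.log (1 / x) - x * w')) :=
        tendsto_const_nhds.sub ((tendsto_const_nhds.mul hw'))
      have h2 : Tendsto (fun K : ℕ =>
          ∑ k ∈ Finset.range (K + 1), (-1 : ℝ) ^ k * wiltonTerm x k)
          atTop (nhds (Real.log (1 / x) - x * w')) :=
        h1.congr (fun K => (sum_succ_eq x K).symm)
      rwa [← tendsto_add_atTop_iff_nat 1]
  · intro w w' hw hw'
    have h1 : Tendsto (fun K : ℕ =>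
        Real.log (1 / x) - x * ∑ k ∈ Finset.range K,
          (-1 : ℝ) ^ k * wiltonTerm (gaussMap x) k)
        atTop (nhds (Real.log (1 / x) - x * w')) :=
      tendsto_const_nhds.sub ((tendsto_const_nhds.mul hw'))
    have h2 : Tendsto (fun K : ℕ =>
        ∑ k ∈ Finset.range (K + 1), (-1 : ℝ) ^ k * wiltonTerm x k)
        atTop (nhds w) := hw.comp (tendsto_add_atTop_nat 1)
    have h3 := h2.congr (fun K => sum_succ_eq x K)
    exact tendsto_nhds_unique h3 h1
end

section
/- Euler–Maclaurin summation formula with remainder: for f that is (2N+1) times continuously differentiable on [0, Z] with Z a positive integer, ∑_{ν=0}^{Z} f(ν) = (f(0)+f(Z))/2 + ∫₀^Z f(u) du + ∑_{j=1}^{N} (B_{2j}/(2j)!)·(f^{(2j-1)}(Z) - f^{(2j-1)}(0)) + r_N(f, Z), where r_N(f,Z) = (1/(2N+1)!)·∫₀^Z P_{2N+1}(u - ⌊u⌋)·f^{(2N+1)}(u) du and P_{2N+1} is the (2N+1)-st Bernoulli polynomial evaluated at the fractional part. -/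
open Finset intervalIntegral
open MeasureTheory Set


noncomputable def emG (Z : ℕ) (f : ℝ → ℝ) (m : ℕ) (x : ℝ) : ℝ :=
  iteratedDerivWithin m f (Set.Icc 0 (Z : ℝ)) x

noncomputable def emI (Z : ℕ) (f : ℝ → ℝ) (m : ℕ) : ℝ :=
  ∫ u in (0 : ℝ)..(Z : ℝ), bernoulliFun m (Int.fract u) * emG Z f m u

lemma emUD (Z : ℕ) (hZ : 0 < Z) : UniqueDiffOn ℝ (Set.Icc 0 (Z:ℝ)) :=
  uniqueDiffOn_Icc (by exact_mod_cast hZ)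

lemma emG_cont (N Z : ℕ) (f : ℝ → ℝ) (hZ : 0 < Z)
    (hf : ContDiffOn ℝ (2 * N + 1) f (Set.Icc 0 (Z : ℝ))) {m : ℕ} (hm : m ≤ 2 * N + 1) :
    ContinuousOn (emG Z f m) (Set.Icc 0 (Z:ℝ)) :=
  hf.continuousOn_iteratedDerivWithin (by exact_mod_cast hm) (emUD Z hZ)

lemma emG_deriv (N Z : ℕ) (f : ℝ → ℝ) (hZ : 0 < Z)
    (hf : ContDiffOn ℝ (2 * N + 1) f (Set.Icc 0 (Z : ℝ)))
    {m : ℕ} (hm : m < 2 * N + 1) {x : ℝ} (hx : x ∈ Set.Ioo (0:ℝ) (Z:ℝ)) :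
    HasDerivAt (emG Z f m) (emG Z f (m + 1) x) x := by
  have hdiff : DifferentiableOn ℝ (iteratedDerivWithin m f (Set.Icc 0 (Z:ℝ)))
      (Set.Icc 0 (Z:ℝ)) :=
    hf.differentiableOn_iteratedDerivWithin (by exact_mod_cast hm) (emUD Z hZ)
  have hxI : x ∈ Set.Icc (0:ℝ) (Z:ℝ) := Set.mem_Icc_of_Ioo hx
  have hnhds : Set.Icc (0:ℝ) (Z:ℝ) ∈ nhds x := Icc_mem_nhds hx.1 hx.2
  have h1 : HasDerivWithinAt (emG Z f m)
      (derivWithin (iteratedDerivWithin m f (Set.Icc 0 (Z:ℝ))) (Set.Icc 0 (Z:ℝ)) x)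
      (Set.Icc 0 (Z:ℝ)) x := (hdiff x hxI).hasDerivWithinAt
  have h2 := h1.hasDerivAt hnhds
  rwa [← iteratedDerivWithin_succ] at h2

lemma emStep (N Z : ℕ) (f : ℝ → ℝ) (hZ : 0 < Z)
    (hf : ContDiffOn ℝ (2 * N + 1) f (Set.Icc 0 (Z : ℝ)))
    {m : ℕ} (hm : m + 1 ≤ 2 * N + 1) {k : ℕ} (hk : k + 1 ≤ Z) :
    ((m : ℝ) + 1) * (∫ u in (k : ℝ)..((k : ℝ) + 1), bernoulliFun m (u - k) * emG Z f m u)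
      + (∫ u in (k : ℝ)..((k : ℝ) + 1), bernoulliFun (m + 1) (u - k) * emG Z f (m + 1) u)
    = bernoulliFun (m + 1) 1 * emG Z f m ((k : ℝ) + 1)
      - bernoulliFun (m + 1) 0 * emG Z f m (k : ℝ) := by
  have hsub : Set.Icc (k:ℝ) ((k:ℝ)+1) ⊆ Set.Icc 0 (Z:ℝ) := by
    apply Set.Icc_subset_Icc
    · positivity
    · exact_mod_cast hk
  have hsubo : Set.Ioo (k:ℝ) ((k:ℝ)+1) ⊆ Set.Ioo 0 (Z:ℝ) := by
    apply Set.Ioo_subset_Ioo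
    · positivity
    · exact_mod_cast hk
  have hcm : ContinuousOn (emG Z f m) (Set.Icc (k:ℝ) ((k:ℝ)+1)) :=
    (emG_cont N Z f hZ hf (Nat.le_of_succ_le hm)).mono hsub
  have hcm1 : ContinuousOn (emG Z f (m+1)) (Set.Icc (k:ℝ) ((k:ℝ)+1)) :=
    (emG_cont N Z f hZ hf hm).mono hsub
  have hBc : ∀ j : ℕ, Continuous (fun u : ℝ => bernoulliFun j (u - k)) := fun j =>
    ((Polynomial.bernoulli j).map (algebraMap ℚ ℝ)).continuous.comp
      (continuous_id.sub continuous_const)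
  have hder : ∀ x ∈ Set.Ioo (k:ℝ) ((k:ℝ)+1),
      HasDerivWithinAt (fun u => bernoulliFun (m+1) (u - k) * emG Z f m u)
        (((m : ℝ) + 1) * bernoulliFun m (x - k) * emG Z f m x
          + bernoulliFun (m+1) (x - k) * emG Z f (m+1) x) (Set.Ioi x) x := by
    intro x hx
    have hB : HasDerivAt (fun u : ℝ => bernoulliFun (m+1) (u - k))
        (((m : ℝ) + 1) * bernoulliFun m (x - k)) x := by
      have h1 := (hasDerivAt_bernoulliFun (m+1) (x - k)).comp x
        ((hasDerivAt_id x).sub_const (k:ℝ))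
      simpa [Nat.add_sub_cancel, Function.comp_def] using h1
    have hg := emG_deriv N Z f hZ hf (Nat.lt_of_succ_le hm) (hsubo hx)
    exact (hB.mul hg).hasDerivWithinAt
  have hcont : ContinuousOn (fun u => bernoulliFun (m+1) (u - k) * emG Z f m u)
      (Set.Icc (k:ℝ) ((k:ℝ)+1)) := ((hBc (m+1)).continuousOn).mul hcm
  have hintm : IntervalIntegrable (fun u => bernoulliFun m (u - k) * emG Z f m u)
      volume (k:ℝ) ((k:ℝ)+1) := by
    apply ContinuousOn.intervalIntegrable
    rw [Set.uIcc_of_le (by linarith)]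
    exact ((hBc m).continuousOn).mul hcm
  have hintm1 : IntervalIntegrable (fun u => bernoulliFun (m+1) (u - k) * emG Z f (m+1) u)
      volume (k:ℝ) ((k:ℝ)+1) := by
    apply ContinuousOn.intervalIntegrable
    rw [Set.uIcc_of_le (by linarith)]
    exact ((hBc (m+1)).continuousOn).mul hcm1
  have hint : IntervalIntegrable (fun x => ((m : ℝ) + 1) * bernoulliFun m (x - k) * emG Z f m x
      + bernoulliFun (m+1) (x - k) * emG Z f (m+1) x) volume (k:ℝ) ((k:ℝ)+1) := by
    refine IntervalIntegrable.add ?_ hintm1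
    have := hintm.const_mul ((m : ℝ) + 1)
    simpa [mul_assoc] using this
  have hftc := integral_eq_sub_of_hasDeriv_right_of_le (by linarith : (k:ℝ) ≤ (k:ℝ)+1)
    hcont hder hint
  rw [intervalIntegral.integral_add ((hintm.const_mul ((m : ℝ) + 1)).congr
      (fun x _ => (mul_assoc _ _ _).symm)) hintm1] at hftc
  rw [intervalIntegral.integral_congr (g := fun x => ((m:ℝ)+1) * (bernoulliFun m (x - k) * emG Z f m x))
      (fun x _ => by ring), intervalIntegral.integral_const_mul] at hftc
  rw [hftc]
  simp

lemma emFractCongr (Z : ℕ) (f : ℝ → ℝ) (m : ℕ) {k : ℕ} :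
    ∀ᵐ x : ℝ, x ∈ Set.uIoc (k:ℝ) ((k:ℝ)+1) →
      bernoulliFun m (Int.fract x) * emG Z f m x = bernoulliFun m (x - k) * emG Z f m x := by
  have h0 : ∀ᵐ x : ℝ, x ∉ ({((k:ℝ)+1)} : Set ℝ) :=
    (MeasureTheory.measure_eq_zero_iff_ae_notMem (μ := volume)).mp (Real.volume_singleton)
  filter_upwards [h0] with x hx hxI
  rw [Set.uIoc_of_le (by linarith : (k:ℝ) ≤ (k:ℝ)+1)] at hxI
  have hxlt : x < (k:ℝ) + 1 := lt_of_le_of_ne hxI.2 (by simpa using hx)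
  have hfl : ⌊x⌋ = (k : ℤ) := by
    rw [Int.floor_eq_iff]
    constructor
    · push_cast; linarith [hxI.1]
    · push_cast; linarith
  have : Int.fract x = x - k := by
    rw [Int.fract, hfl]; push_cast; ring
  rw [this]

lemma emI_eq_sum (N Z : ℕ) (f : ℝ → ℝ) (hZ : 0 < Z)
    (hf : ContDiffOn ℝ (2 * N + 1) f (Set.Icc 0 (Z : ℝ))) {m : ℕ} (hm : m ≤ 2 * N + 1) :
    emI Z f m = ∑ k ∈ Finset.range Z,
      ∫ u in (k : ℝ)..((k : ℝ) + 1), bernoulliFun m (u - k) * emG Z f m u := by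
  have hBc : Continuous (fun u : ℝ => bernoulliFun m u) :=
    ((Polynomial.bernoulli m).map (algebraMap ℚ ℝ)).continuous
  have hnice : ∀ k : ℕ, k + 1 ≤ Z → IntervalIntegrable
      (fun u => bernoulliFun m (u - k) * emG Z f m u) volume (k:ℝ) ((k:ℝ)+1) := by
    intro k hk
    apply ContinuousOn.intervalIntegrable
    rw [Set.uIcc_of_le (by linarith)]
    exact ((hBc.comp (continuous_id.sub continuous_const)).continuousOn).mul
      ((emG_cont N Z f hZ hf hm).mono (Set.Icc_subset_Icc (by positivity) (by exact_mod_cast hk)))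
  have hint : ∀ k : ℕ, k + 1 ≤ Z → IntervalIntegrable
      (fun u => bernoulliFun m (Int.fract u) * emG Z f m u) volume (k:ℝ) ((k:ℝ)+1) := by
    intro k hk
    refine (hnice k hk).congr_ae ?_
    rw [Filter.EventuallyEq, MeasureTheory.ae_restrict_iff' measurableSet_uIoc]
    filter_upwards [emFractCongr Z f m (k := k)] with x hx hx2
    exact (hx hx2).symm
  have hsum := intervalIntegral.sum_integral_adjacent_intervals
    (a := fun k : ℕ => (k : ℝ)) (n := Z)
    (f := fun u => bernoulliFun m (Int.fract u) * emG Z f m u) (μ := volume)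
    (fun k hk => by
      show IntervalIntegrable _ volume ((k:ℕ):ℝ) ((k+1:ℕ):ℝ)
      rw [Nat.cast_succ]
      exact hint k hk)
  rw [emI]
  simp only [Nat.cast_zero] at hsum
  rw [← hsum]
  apply Finset.sum_congr rfl
  intro k hk
  rw [Nat.cast_succ]
  exact intervalIntegral.integral_congr_ae (emFractCongr Z f m)

lemma emGlobal (N Z : ℕ) (f : ℝ → ℝ) (hZ : 0 < Z)
    (hf : ContDiffOn ℝ (2 * N + 1) f (Set.Icc 0 (Z : ℝ)))
    {m : ℕ} (hm1 : 1 ≤ m) (hm : m + 1 ≤ 2 * N + 1) :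
    ((m : ℝ) + 1) * emI Z f m + emI Z f (m + 1)
      = (bernoulli (m + 1) : ℝ) * (emG Z f m (Z : ℝ) - emG Z f m 0) := by
  rw [emI_eq_sum N Z f hZ hf (Nat.le_of_succ_le hm), emI_eq_sum N Z f hZ hf hm,
    Finset.mul_sum, ← Finset.sum_add_distrib]
  have hB0 : bernoulliFun (m + 1) 0 = (bernoulli (m + 1) : ℝ) := bernoulliFun_eval_zero (m + 1)
  have hB1 : bernoulliFun (m + 1) 1 = (bernoulli (m + 1) : ℝ) := by
    rw [bernoulliFun_endpoints_eq_of_ne_one (by omega), hB0]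
  have key : ∀ k ∈ Finset.range Z,
      ((m : ℝ) + 1) * (∫ u in (k : ℝ)..((k : ℝ) + 1), bernoulliFun m (u - k) * emG Z f m u)
        + (∫ u in (k : ℝ)..((k : ℝ) + 1), bernoulliFun (m+1) (u - k) * emG Z f (m+1) u)
      = (fun j : ℕ => (bernoulli (m + 1) : ℝ) * emG Z f m (j : ℝ)) (k + 1)
        - (fun j : ℕ => (bernoulli (m + 1) : ℝ) * emG Z f m (j : ℝ)) k := by
    intro k hk
    rw [emStep N Z f hZ hf hm (Finset.mem_range.mp hk), hB0, hB1]
    push_cast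
    ring
  rw [Finset.sum_congr rfl key, Finset.sum_range_sub
    (fun j : ℕ => (bernoulli (m + 1) : ℝ) * emG Z f m (j : ℝ))]
  push_cast
  ring

lemma emBase (N Z : ℕ) (f : ℝ → ℝ) (hZ : 0 < Z)
    (hf : ContDiffOn ℝ (2 * N + 1) f (Set.Icc 0 (Z : ℝ))) :
    ∑ ν ∈ Finset.range (Z + 1), f ν
      = (f 0 + f (Z : ℝ)) / 2 + (∫ u in (0 : ℝ)..(Z : ℝ), f u) + emI Z f 1 := by
  have hg0 : emG Z f 0 = f := by
    funext x; simp [emG, iteratedDerivWithin_zero]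
  have hB0 : ∀ x : ℝ, bernoulliFun 0 x = 1 := by
    intro x; simp [bernoulliFun]
  have hB10 : bernoulliFun 1 0 = -(1/2 : ℝ) := by
    rw [bernoulliFun_eval_zero, bernoulli_one]; norm_num
  have hB11 : bernoulliFun 1 1 = (1/2 : ℝ) := by
    rw [bernoulliFun_eval_one, hB10]; norm_num
  have hI0 : emI Z f 0 = ∫ u in (0 : ℝ)..(Z : ℝ), f u := by
    rw [emI]
    apply intervalIntegral.integral_congr
    intro x _
    simp [hB0, hg0]
  have key : ∀ k ∈ Finset.range Z,
      (∫ u in (k : ℝ)..((k : ℝ) + 1), bernoulliFun 0 (u - k) * emG Z f 0 u)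
        + (∫ u in (k : ℝ)..((k : ℝ) + 1), bernoulliFun 1 (u - k) * emG Z f 1 u)
      = (f ((k : ℝ) + 1) + f (k : ℝ)) / 2 := by
    intro k hk
    have h := emStep N Z f hZ hf (m := 0) (by omega) (Finset.mem_range.mp hk)
    rw [hB10, hB11] at h
    simp only [hg0] at h ⊢
    push_cast at h ⊢
    linarith [h]
  have hsum : emI Z f 0 + emI Z f 1
      = ∑ k ∈ Finset.range Z, (f ((k : ℝ) + 1) + f (k : ℝ)) / 2 := by
    rw [emI_eq_sum N Z f hZ hf (by omega), emI_eq_sum N Z f hZ hf (by omega),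
      ← Finset.sum_add_distrib]
    exact Finset.sum_congr rfl key
  have hA : ∑ k ∈ Finset.range Z, (f ((k : ℝ) + 1) + f (k : ℝ)) / 2
      = ∑ ν ∈ Finset.range (Z + 1), f ν - (f 0 + f (Z : ℝ)) / 2 := by
    have h1 : ∑ k ∈ Finset.range Z, f ((k : ℝ) + 1)
        = ∑ ν ∈ Finset.range (Z + 1), f ν - f 0 := by
      have h0 := Finset.sum_range_succ' (fun ν : ℕ => f ν) Z
      have h2 : ∑ k ∈ Finset.range Z, f ((k : ℝ) + 1)
          = ∑ k ∈ Finset.range Z, f ((k + 1 : ℕ) : ℝ) := by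
        refine Finset.sum_congr rfl fun k _ => ?_
        push_cast; ring_nf
      rw [h2, h0]
      push_cast
      ring
    have h2 : ∑ k ∈ Finset.range Z, f (k : ℝ)
        = ∑ ν ∈ Finset.range (Z + 1), f ν - f (Z : ℝ) := by
      rw [Finset.sum_range_succ (fun ν : ℕ => f ν) Z]
      ring
    calc ∑ k ∈ Finset.range Z, (f ((k : ℝ) + 1) + f (k : ℝ)) / 2
        = (∑ k ∈ Finset.range Z, (f ((k : ℝ) + 1) + f (k : ℝ))) / 2 := by
          rw [Finset.sum_div]
      _ = (∑ k ∈ Finset.range Z, f ((k : ℝ) + 1) + ∑ k ∈ Finset.range Z, f (k : ℝ)) / 2 := by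
          rw [Finset.sum_add_distrib]
      _ = ∑ ν ∈ Finset.range (Z + 1), f ν - (f 0 + f (Z : ℝ)) / 2 := by
          rw [h1, h2]; ring
  rw [hA] at hsum
  linarith [hsum, hI0]

lemma emInduct (N Z : ℕ) (f : ℝ → ℝ) (hZ : 0 < Z)
    (hf : ContDiffOn ℝ (2 * N + 1) f (Set.Icc 0 (Z : ℝ))) (n : ℕ) (hn : n ≤ N) :
    emI Z f 1 = ∑ j ∈ Finset.Icc 1 n,
        ((bernoulli (2 * j) : ℝ) / (Nat.factorial (2 * j)))
          * (emG Z f (2 * j - 1) (Z : ℝ) - emG Z f (2 * j - 1) 0)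
      + (1 / (Nat.factorial (2 * n + 1) : ℝ)) * emI Z f (2 * n + 1) := by
  induction n with
  | zero => simp
  | succ n ih =>
    rw [ih (Nat.le_of_succ_le hn)]
    have h1 := emGlobal N Z f hZ hf (m := 2 * n + 1) (by omega) (by omega)
    have h2 := emGlobal N Z f hZ hf (m := 2 * n + 2) (by omega) (by omega)
    have hodd : (bernoulli (2 * n + 2 + 1) : ℝ) = 0 := by
      rw [bernoulli_eq_bernoulli'_of_ne_one (by omega),
        bernoulli'_eq_zero_of_odd ⟨n + 1, by ring⟩ (by omega)]
      simp
    rw [hodd, zero_mul] at h2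
    rw [Finset.sum_Icc_succ_top (by omega : 1 ≤ n + 1)]
    have e1 : 2 * (n + 1) = 2 * n + 2 := by omega
    have e2 : 2 * n + 2 - 1 = 2 * n + 1 := by omega
    have e3 : 2 * n + 2 + 1 = 2 * n + 3 := by omega
    rw [e1, e2, e3]
    have key : (1 / (Nat.factorial (2 * n + 1) : ℝ)) * emI Z f (2 * n + 1)
        = ((bernoulli (2 * n + 2) : ℝ) / (Nat.factorial (2 * n + 2)))
            * (emG Z f (2 * n + 1) (Z : ℝ) - emG Z f (2 * n + 1) 0)
          + (1 / (Nat.factorial (2 * n + 3) : ℝ)) * emI Z f (2 * n + 3) := by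
      push_cast at h1 h2
      have hI2 : emI Z f (2 * n + 2) = -(emI Z f (2 * n + 3)) / (2 * (n : ℝ) + 3) := by
        field_simp
        linarith [h2]
      have hI1 : emI Z f (2 * n + 1)
          = ((bernoulli (2 * n + 2) : ℝ)
              * (emG Z f (2 * n + 1) (Z : ℝ) - emG Z f (2 * n + 1) 0)
            + emI Z f (2 * n + 3) / (2 * (n : ℝ) + 3)) / (2 * (n : ℝ) + 2) := by
        rw [hI2] at h1
        field_simp at h1 ⊢
        linarith [h1]
      have hf2 : (Nat.factorial (2 * n + 2) : ℝ)
          = (2 * (n : ℝ) + 2) * (Nat.factorial (2 * n + 1) : ℝ) := by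
        rw [show 2 * n + 2 = (2 * n + 1) + 1 from rfl, Nat.factorial_succ]
        push_cast; ring
      have hf3 : (Nat.factorial (2 * n + 3) : ℝ)
          = (2 * (n : ℝ) + 3) * (Nat.factorial (2 * n + 2) : ℝ) := by
        rw [show 2 * n + 3 = (2 * n + 2) + 1 from rfl, Nat.factorial_succ]
        push_cast; ring
      have hF1 : (Nat.factorial (2 * n + 1) : ℝ) ≠ 0 := by
        exact_mod_cast Nat.factorial_ne_zero _
      rw [hI1, hf3, hf2]
      have hp2 : (2 * (n : ℝ) + 2) ≠ 0 := by positivity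
      have hp3 : (2 * (n : ℝ) + 3) ≠ 0 := by positivity
      field_simp
    rw [key]
    ring



/-- Euler–Maclaurin summation formula with remainder: for `f` that is `(2N+1)` times
continuously differentiable on `[0, Z]`,
`∑_{ν=0}^{Z} f(ν) = (f(0)+f(Z))/2 + ∫₀^Z f + ∑_{j=1}^N (B_{2j}/(2j)!)(f^{(2j-1)}(Z) -
f^{(2j-1)}(0)) + r_N(f,Z)` where
`r_N(f,Z) = (1/(2N+1)!) ∫₀^Z B_{2N+1}({u}) f^{(2N+1)}(u) du`. -/
theorem euler_maclaurin (N : ℕ) (Z : ℕ) (hZ : 0 < Z) (f : ℝ → ℝ)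
    (hf : ContDiffOn ℝ (2 * N + 1) f (Set.Icc 0 (Z : ℝ))) :
    ∑ ν ∈ Finset.range (Z + 1), f ν =
      (f 0 + f Z) / 2 + (∫ u in (0 : ℝ)..(Z : ℝ), f u)
      + ∑ j ∈ Finset.Icc 1 N,
          ((bernoulli (2 * j) : ℝ) / (Nat.factorial (2 * j)))
            * (iteratedDerivWithin (2 * j - 1) f (Set.Icc 0 (Z : ℝ)) Z
               - iteratedDerivWithin (2 * j - 1) f (Set.Icc 0 (Z : ℝ)) 0)
      + (1 / (Nat.factorial (2 * N + 1) : ℝ)) *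
          ∫ u in (0 : ℝ)..(Z : ℝ),
            (Polynomial.map (algebraMap ℚ ℝ) (Polynomial.bernoulli (2 * N + 1))).eval
                (Int.fract u)
              * iteratedDerivWithin (2 * N + 1) f (Set.Icc 0 (Z : ℝ)) u := by
  have hmain := emBase N Z f hZ hf
  rw [emInduct N Z f hZ hf N le_rfl] at hmain
  rw [hmain]
  simp only [emG, emI, bernoulliFun]
  ring
end
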